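/- arXiv:1105.1212 — 5 statements merged into one kernel-verified Lean document; each statement's English description precedes it below -/
import Mathlib

section
/- Let P be a K×K row-stochastic real matrix, μ a probability vector on {1,…,K}, a₀, a₁ : {1,…,K} → ℝ, and λ = max_{1≤k≤K} Σ_{j=1}^{K} P_{kj} a₁(j)². Let (Z_t)_{t≥1} be a Markov chain on {1,…,K} with transition matrix P and initial distribution μ. If λ < 1, then the series Σ_{m=0}^{∞} E[(Π_{u=2}^{m+1} a₁(Z_u)²) · a₀(Z₁)²] converges and its sum is at most (μ′ φ₀² 𝟙) / (1 − λ), where μ′ φ₀² 𝟙 = Σ_{k=1}^{K} μ_k a₀(k)². -/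
open MeasureTheory

/-- Under `λ = max_k ∑_j P k j a₁(j)² < 1`, the series
`∑_{m=0}^∞ E[(∏_{u=2}^{m+1} a₁(Z_u)²) a₀(Z₁)²]` converges and its sum is at most
`(∑_k μ_k a₀(k)²) / (1 - λ)`.  Here `Z n` stands for `Z_{n+1}`. -/
theorem stmt_9 (K : ℕ) (P : Matrix (Fin K) (Fin K) ℝ)
    (hP0 : ∀ i j, 0 ≤ P i j) (hP1 : ∀ i, ∑ j, P i j = 1)
    (μvec : Fin K → ℝ) (hμ0 : ∀ k, 0 ≤ μvec k) (hμ1 : ∑ k, μvec k = 1)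
    (a₀ a₁ : Fin K → ℝ) (lam : ℝ)
    (hlam : IsGreatest (Set.range fun k : Fin K => ∑ j, P k j * a₁ j ^ 2) lam)
    (hlt : lam < 1)
    {Ω : Type*} [MeasurableSpace Ω] (μpr : Measure Ω) [IsProbabilityMeasure μpr]
    (Z : ℕ → Ω → Fin K) (hZmeas : ∀ t, Measurable (Z t))
    (hZ : ∀ (n : ℕ) (z : Fin (n + 1) → Fin K),
      μpr {ω | ∀ i : Fin (n + 1), Z i ω = z i} =
        ENNReal.ofReal (μvec (z 0) * ∏ i : Fin n, P (z i.castSucc) (z i.succ))) :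
    Summable (fun m : ℕ =>
        ∫ ω, (∏ u ∈ Finset.Icc 1 m, a₁ (Z u ω) ^ 2) * a₀ (Z 0 ω) ^ 2 ∂μpr) ∧
      (∑' m : ℕ, ∫ ω, (∏ u ∈ Finset.Icc 1 m, a₁ (Z u ω) ^ 2) * a₀ (Z 0 ω) ^ 2 ∂μpr)
        ≤ (∑ k, μvec k * a₀ k ^ 2) / (1 - lam) := by
  classical
  set C : ℝ := ∑ k, μvec k * a₀ k ^ 2 with hCdef
  -- path weight and path functional
  set W : ∀ m : ℕ, (Fin (m + 1) → Fin K) → ℝ :=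
    fun m z => μvec (z 0) * ∏ i : Fin m, P (z i.castSucc) (z i.succ) with hWdef
  set F : ∀ m : ℕ, (Fin (m + 1) → Fin K) → ℝ :=
    fun m z => (∏ i : Fin m, a₁ (z i.succ) ^ 2) * a₀ (z 0) ^ 2 with hFdef
  set S : ℕ → ℝ := fun m => ∑ z : Fin (m + 1) → Fin K, W m z * F m z with hSdef
  have hW0 : ∀ m z, 0 ≤ W m z := by
    intro m z
    exact mul_nonneg (hμ0 _) (Finset.prod_nonneg fun i _ => hP0 _ _)
  have hF0 : ∀ m z, 0 ≤ F m z := by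
    intro m z
    exact mul_nonneg (Finset.prod_nonneg fun i _ => sq_nonneg _) (sq_nonneg _)
  have hlam0 : 0 ≤ lam := by
    obtain ⟨k, hk⟩ := hlam.1
    exact hk ▸ Finset.sum_nonneg fun j _ => mul_nonneg (hP0 _ _) (sq_nonneg _)
  -- Step 1: each expectation equals the path sum S m
  have hterm : ∀ m : ℕ,
      (∫ ω, (∏ u ∈ Finset.Icc 1 m, a₁ (Z u ω) ^ 2) * a₀ (Z 0 ω) ^ 2 ∂μpr) = S m := by
    intro m
    set φ : Ω → (Fin (m + 1) → Fin K) := fun ω i => Z i ω with hφdef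
    have hφ : Measurable φ := measurable_pi_lambda _ fun i => hZmeas i
    have hmap : IsProbabilityMeasure (μpr.map φ) := Measure.isProbabilityMeasure_map hφ.aemeasurable
    have hGmeas : Measurable (F m) := Measurable.of_discrete
    have hint : ∀ ω, (∏ u ∈ Finset.Icc 1 m, a₁ (Z u ω) ^ 2) * a₀ (Z 0 ω) ^ 2 = F m (φ ω) := by
      intro ω
      have h1 : ∏ u ∈ Finset.Icc 1 m, a₁ (Z u ω) ^ 2
          = ∏ i : Fin m, a₁ (Z (1 + (i : ℕ)) ω) ^ 2 := by
        rw [Fin.prod_univ_eq_prod_range (fun i => a₁ (Z (1 + i) ω) ^ 2) m,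
          ← Finset.Ico_add_one_right_eq_Icc, Finset.prod_Ico_eq_prod_range]
        simp
      rw [h1]
      simp only [hFdef, hφdef]
      congr 1
      refine Finset.prod_congr rfl fun i _ => ?_
      congr 2
      simp [Fin.val_succ, Nat.add_comm]
    simp only [hint]
    rw [← integral_map hφ.aemeasurable hGmeas.aestronglyMeasurable,
      integral_fintype (Integrable.of_finite)]
    refine Finset.sum_congr rfl fun z _ => ?_
    have hpre : φ ⁻¹' {z} = {ω | ∀ i : Fin (m + 1), Z i ω = z i} := by
      ext ω
      simp [hφdef, funext_iff]
    rw [Measure.real, Measure.map_apply hφ (measurableSet_singleton z), hpre, hZ m z,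
      ENNReal.toReal_ofReal (hW0 m z)]
    simp [smul_eq_mul]
  -- Step 2: S 0 = C
  have hS0 : S 0 = C := by
    have e := Fintype.sum_equiv (Equiv.funUnique (Fin 1) (Fin K)).symm
      (fun k => W 0 ((Equiv.funUnique (Fin 1) (Fin K)).symm k)
        * F 0 ((Equiv.funUnique (Fin 1) (Fin K)).symm k)) (fun z => W 0 z * F 0 z)
      (fun k => rfl)
    calc S 0 = ∑ z : Fin 1 → Fin K, W 0 z * F 0 z := rfl
      _ = ∑ k : Fin K, W 0 ((Equiv.funUnique (Fin 1) (Fin K)).symm k)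
            * F 0 ((Equiv.funUnique (Fin 1) (Fin K)).symm k) := e.symm
      _ = C := by
          refine Finset.sum_congr rfl fun k _ => ?_
          simp [hWdef, hFdef, Equiv.funUnique]
  -- Step 3: recursion S (m+1) ≤ lam * S m
  have hrec : ∀ m : ℕ, S (m + 1) ≤ lam * S m := by
    intro m
    have hsplit : S (m + 1)
        = ∑ p : Fin K × (Fin (m + 1) → Fin K),
            W (m + 1) (Fin.snocEquiv (fun _ => Fin K) p)
              * F (m + 1) (Fin.snocEquiv (fun _ => Fin K) p) := by
      rw [hSdef]
      exact (Fintype.sum_equiv (Fin.snocEquiv (fun _ => Fin K))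
        _ (fun z => W (m + 1) z * F (m + 1) z) (fun p => rfl)).symm
    have hWsnoc : ∀ (j : Fin K) (z : Fin (m + 1) → Fin K),
        W (m + 1) (Fin.snoc z j) = W m z * P (z (Fin.last m)) j := by
      intro j z
      simp only [hWdef]
      rw [Fin.prod_univ_castSucc]
      have h0 : (Fin.snoc z j : Fin (m + 2) → Fin K) 0 = z 0 := by
        rw [show (0 : Fin (m + 2)) = Fin.castSucc 0 by simp, Fin.snoc_castSucc]
      have hmid : ∀ i : Fin m,
          P ((Fin.snoc z j : Fin (m + 2) → Fin K) (i.castSucc).castSucc)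
            ((Fin.snoc z j : Fin (m + 2) → Fin K) (i.castSucc).succ)
          = P (z i.castSucc) (z i.succ) := by
        intro i
        rw [Fin.succ_castSucc, Fin.snoc_castSucc, Fin.snoc_castSucc]
      have hlast : P ((Fin.snoc z j : Fin (m + 2) → Fin K) (Fin.last m).castSucc)
          ((Fin.snoc z j : Fin (m + 2) → Fin K) (Fin.last m).succ)
          = P (z (Fin.last m)) j := by
        rw [Fin.snoc_castSucc, Fin.succ_last, Fin.snoc_last]
      rw [h0, Finset.prod_congr rfl fun i _ => hmid i, hlast]
      ring
    have hFsnoc : ∀ (j : Fin K) (z : Fin (m + 1) → Fin K),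
        F (m + 1) (Fin.snoc z j) = F m z * a₁ j ^ 2 := by
      intro j z
      simp only [hFdef]
      rw [Fin.prod_univ_castSucc]
      have h0 : (Fin.snoc z j : Fin (m + 2) → Fin K) 0 = z 0 := by
        rw [show (0 : Fin (m + 2)) = Fin.castSucc 0 by simp, Fin.snoc_castSucc]
      have hmid : ∀ i : Fin m,
          a₁ ((Fin.snoc z j : Fin (m + 2) → Fin K) (i.castSucc).succ) ^ 2
          = a₁ (z i.succ) ^ 2 := by
        intro i
        rw [Fin.succ_castSucc, Fin.snoc_castSucc]
      have hlast : ((Fin.snoc z j : Fin (m + 2) → Fin K) (Fin.last m).succ) = j := by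
        rw [Fin.succ_last, Fin.snoc_last]
      rw [h0, Finset.prod_congr rfl fun i _ => hmid i, hlast]
      ring
    rw [hsplit, Fintype.sum_prod_type]
    have hswap : ∑ j : Fin K, ∑ z : Fin (m + 1) → Fin K,
        W (m + 1) (Fin.snocEquiv (fun _ => Fin K) (j, z))
          * F (m + 1) (Fin.snocEquiv (fun _ => Fin K) (j, z))
        = ∑ z : Fin (m + 1) → Fin K,
            (W m z * F m z) * (∑ j : Fin K, P (z (Fin.last m)) j * a₁ j ^ 2) := by
      rw [Finset.sum_comm]
      refine Finset.sum_congr rfl fun z _ => ?_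
      rw [Finset.mul_sum]
      refine Finset.sum_congr rfl fun j _ => ?_
      have : Fin.snocEquiv (fun _ => Fin K) (j, z) = Fin.snoc z j := by
        funext i; rfl
      rw [this, hWsnoc j z, hFsnoc j z]
      ring
    rw [hswap, hSdef, Finset.mul_sum]
    refine Finset.sum_le_sum fun z _ => ?_
    have hb : (∑ j : Fin K, P (z (Fin.last m)) j * a₁ j ^ 2) ≤ lam :=
      hlam.2 ⟨z (Fin.last m), rfl⟩
    calc (W m z * F m z) * (∑ j : Fin K, P (z (Fin.last m)) j * a₁ j ^ 2)
        ≤ (W m z * F m z) * lam :=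
          mul_le_mul_of_nonneg_left hb (mul_nonneg (hW0 m z) (hF0 m z))
      _ = lam * (W m z * F m z) := by ring
  have hSnonneg : ∀ m, 0 ≤ S m := fun m =>
    Finset.sum_nonneg fun z _ => mul_nonneg (hW0 m z) (hF0 m z)
  have hC0 : 0 ≤ C := Finset.sum_nonneg fun k _ => mul_nonneg (hμ0 k) (sq_nonneg _)
  have hSle : ∀ m, S m ≤ lam ^ m * C := by
    intro m
    induction m with
    | zero => simp [hS0]
    | succ n ih =>
      calc S (n + 1) ≤ lam * S n := hrec n
        _ ≤ lam * (lam ^ n * C) := mul_le_mul_of_nonneg_left ih hlam0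
        _ = lam ^ (n + 1) * C := by ring
  have hfun : (fun m : ℕ =>
      ∫ ω, (∏ u ∈ Finset.Icc 1 m, a₁ (Z u ω) ^ 2) * a₀ (Z 0 ω) ^ 2 ∂μpr) = S :=
    funext hterm
  have hgeo : Summable (fun m : ℕ => lam ^ m * C) :=
    (summable_geometric_of_lt_one hlam0 hlt).mul_right C
  have hsum : Summable S := Summable.of_nonneg_of_le hSnonneg hSle hgeo
  rw [hfun]
  refine ⟨hsum, ?_⟩
  calc (∑' m : ℕ, S m) ≤ ∑' m : ℕ, lam ^ m * C := Summable.tsum_le_tsum hSle hsum hgeo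
    _ = (1 - lam)⁻¹ * C := by
        rw [tsum_mul_right, tsum_geometric_of_lt_one hlam0 hlt]
    _ = C / (1 - lam) := by ring
end

section
/- Let P be a K×K row-stochastic real matrix, μ a probability vector on {1,…,K}, a₀, a₁ : {1,…,K} → ℝ, and λ = max_{1≤k≤K} Σ_{j=1}^{K} P_{kj} a₁(j)². Let (Z_t)_{t≥1} be a Markov chain on {1,…,K} with transition matrix P and initial distribution μ, and for m ≥ 0 set A_m = (Π_{i=2}^{m+1} a₁(Z_i)) · a₀(Z₁). If λ < 1, then for every t ≥ 1, E[(Σ_{m=0}^{t-1} A_m)²] ≤ 2 · ((1 + μ′ φ₀² 𝟙) / (1 − λ^{1/2}))², where μ′ φ₀² 𝟙 = Σ_{k=1}^{K} μ_k a₀(k)². -/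
open MeasureTheory Finset

namespace Stmt11Aux

variable {K : ℕ}

/-- Extend a tuple indexed by `Fin (n+1)` to `ℕ`. -/
def ext' (n : ℕ) (z : Fin (n + 1) → Fin K) (i : ℕ) : Fin K :=
  if h : i < n + 1 then z ⟨i, h⟩ else z 0

lemma ext'_lt {n : ℕ} (z : Fin (n + 1) → Fin K) {i : ℕ} (h : i < n + 1) :
    ext' n z i = z ⟨i, h⟩ := dif_pos h

/-- Probability of a chain path. -/
def chainW (μvec : Fin K → ℝ) (P : Matrix (Fin K) (Fin K) ℝ) (n : ℕ)
    (z : Fin (n + 1) → Fin K) : ℝ :=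
  μvec (z 0) * ∏ i : Fin n, P (z i.castSucc) (z i.succ)

lemma chainW_nonneg {μvec : Fin K → ℝ} {P : Matrix (Fin K) (Fin K) ℝ}
    (hμ0 : ∀ k, 0 ≤ μvec k) (hP0 : ∀ i j, 0 ≤ P i j) (n : ℕ)
    (z : Fin (n + 1) → Fin K) : 0 ≤ chainW μvec P n z :=
  mul_nonneg (hμ0 _) (Finset.prod_nonneg fun _ _ => hP0 _ _)

lemma snoc_zero' {n : ℕ} (y : Fin (n + 1) → Fin K) (k : Fin K) :
    (Fin.snoc y k : Fin (n + 2) → Fin K) 0 = y 0 := by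
  have h : (0 : Fin (n + 2)) = Fin.castSucc (0 : Fin (n + 1)) := rfl
  rw [h, Fin.snoc_castSucc]

lemma chainW_snoc {μvec : Fin K → ℝ} {P : Matrix (Fin K) (Fin K) ℝ} {n : ℕ}
    (y : Fin (n + 1) → Fin K) (k : Fin K) :
    chainW μvec P (n + 1) (Fin.snoc y k) = chainW μvec P n y * P (y (Fin.last n)) k := by
  unfold chainW
  rw [Fin.prod_univ_castSucc, snoc_zero']
  have h1 : ∀ i : Fin n,
      P ((Fin.snoc y k : Fin (n+2) → Fin K) i.castSucc.castSucc)
        ((Fin.snoc y k : Fin (n+2) → Fin K) i.castSucc.succ)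
      = P (y i.castSucc) (y i.succ) := by
    intro i
    rw [Fin.snoc_castSucc, Fin.succ_castSucc, Fin.snoc_castSucc]
  rw [Finset.prod_congr rfl fun i _ => h1 i]
  have h2 : ((Fin.last n).succ : Fin (n + 2)) = Fin.last (n + 1) := Fin.succ_last n
  rw [Fin.snoc_castSucc, h2, Fin.snoc_last]
  ring

lemma ext'_snoc {n : ℕ} (y : Fin (n + 1) → Fin K) (k : Fin K) {i : ℕ} (hi : i ≤ n) :
    ext' (n + 1) (Fin.snoc y k) i = ext' n y i := by
  unfold ext'
  have h1 : i < n + 1 := by omega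
  have h2 : i < n + 2 := by omega
  rw [dif_pos h2, dif_pos h1]
  have h : (⟨i, h2⟩ : Fin (n + 2)) = Fin.castSucc ⟨i, h1⟩ := rfl
  rw [h, Fin.snoc_castSucc]

lemma ext'_snoc_top {n : ℕ} (y : Fin (n + 1) → Fin K) (k : Fin K) :
    ext' (n + 1) (Fin.snoc y k) (n + 1) = k := by
  unfold ext'
  rw [dif_pos (by omega : n + 1 < n + 2)]
  have h : (⟨n + 1, by omega⟩ : Fin (n + 2)) = Fin.last (n + 1) := rfl
  rw [h, Fin.snoc_last]

lemma sum_snoc (n : ℕ) (F : (Fin (n + 2) → Fin K) → ℝ) :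
    ∑ z : Fin (n + 2) → Fin K, F z
      = ∑ k : Fin K, ∑ y : Fin (n + 1) → Fin K, F (Fin.snoc y k) := by
  calc ∑ z : Fin (n + 2) → Fin K, F z
      = ∑ p : Fin K × (Fin (n + 1) → Fin K), F (Fin.snoc p.2 p.1) :=
        (Fintype.sum_equiv (Fin.snocEquiv fun _ => Fin K)
          (fun p => F (Fin.snoc p.2 p.1)) F fun p => rfl).symm
    _ = ∑ k : Fin K, ∑ y : Fin (n + 1) → Fin K, F (Fin.snoc y k) :=
        Fintype.sum_prod_type (f := fun p : Fin K × (Fin (n + 1) → Fin K) => F (Fin.snoc p.2 p.1))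

lemma key (P : Matrix (Fin K) (Fin K) ℝ) (μvec a₀ a₁ : Fin K → ℝ) (lam : ℝ)
    (hP0 : ∀ i j, 0 ≤ P i j) (hP1 : ∀ i, ∑ j, P i j = 1)
    (hμ0 : ∀ k, 0 ≤ μvec k)
    (hlam : ∀ k, ∑ j, P k j * a₁ j ^ 2 ≤ lam) (hlam0 : 0 ≤ lam) :
    ∀ n : ℕ, ∀ m ≤ n,
      ∑ z : Fin (n + 1) → Fin K, chainW μvec P n z *
          (a₀ (z 0) ^ 2 * ∏ i ∈ Icc 1 m, a₁ (ext' n z i) ^ 2)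
        ≤ lam ^ m * ∑ k, μvec k * a₀ k ^ 2 := by
  intro n
  induction n with
  | zero =>
      intro m hm
      interval_cases m
      simp only [pow_zero, one_mul, chainW]
      rw [show (Icc 1 0 : Finset ℕ) = ∅ from rfl]
      simp only [Finset.prod_empty, Finset.univ_eq_empty, mul_one]
      refine le_of_eq (Fintype.sum_equiv (Equiv.funUnique (Fin 1) (Fin K))
        _ _ fun z => ?_)
      simp [Equiv.funUnique]
  | succ n ih =>
      intro m hm
      rcases Nat.lt_succ_iff_lt_or_eq.mp (Nat.lt_succ_of_le hm) with hmn | rfl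
      · -- m ≤ n
        have hmn' : m ≤ n := by omega
        rw [sum_snoc]
        have h1 : ∀ (k : Fin K) (y : Fin (n + 1) → Fin K),
            chainW μvec P (n + 1) (Fin.snoc y k) *
              (a₀ ((Fin.snoc y k : Fin (n+2) → Fin K) 0) ^ 2 *
                ∏ i ∈ Icc 1 m, a₁ (ext' (n + 1) (Fin.snoc y k) i) ^ 2)
            = (chainW μvec P n y *
                (a₀ (y 0) ^ 2 * ∏ i ∈ Icc 1 m, a₁ (ext' n y i) ^ 2)) *
                P (y (Fin.last n)) k := by
          intro k y
          rw [chainW_snoc, snoc_zero',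
            Finset.prod_congr rfl fun i hi => by
              rw [ext'_snoc y k (le_trans (mem_Icc.mp hi).2 hmn')]]
          ring
        calc ∑ k : Fin K, ∑ y : Fin (n + 1) → Fin K,
              chainW μvec P (n + 1) (Fin.snoc y k) *
                (a₀ ((Fin.snoc y k : Fin (n+2) → Fin K) 0) ^ 2 *
                  ∏ i ∈ Icc 1 m, a₁ (ext' (n + 1) (Fin.snoc y k) i) ^ 2)
            = ∑ y : Fin (n + 1) → Fin K,
                (chainW μvec P n y *
                  (a₀ (y 0) ^ 2 * ∏ i ∈ Icc 1 m, a₁ (ext' n y i) ^ 2)) *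
                  ∑ k : Fin K, P (y (Fin.last n)) k := by
              rw [Finset.sum_comm]
              exact Finset.sum_congr rfl fun y _ => by
                rw [Finset.mul_sum]
                exact Finset.sum_congr rfl fun k _ => h1 k y
          _ = ∑ y : Fin (n + 1) → Fin K,
                chainW μvec P n y *
                  (a₀ (y 0) ^ 2 * ∏ i ∈ Icc 1 m, a₁ (ext' n y i) ^ 2) := by
              exact Finset.sum_congr rfl fun y _ => by rw [hP1, mul_one]
          _ ≤ lam ^ m * ∑ k, μvec k * a₀ k ^ 2 := ih m hmn'
      · -- m = n + 1
        rw [sum_snoc]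
        have h2 : ∀ (k : Fin K) (y : Fin (n + 1) → Fin K),
            chainW μvec P (n + 1) (Fin.snoc y k) *
              (a₀ ((Fin.snoc y k : Fin (n+2) → Fin K) 0) ^ 2 *
                ∏ i ∈ Icc 1 (n + 1), a₁ (ext' (n + 1) (Fin.snoc y k) i) ^ 2)
            = (chainW μvec P n y *
                (a₀ (y 0) ^ 2 * ∏ i ∈ Icc 1 n, a₁ (ext' n y i) ^ 2)) *
                (P (y (Fin.last n)) k * a₁ k ^ 2) := by
          intro k y
          rw [chainW_snoc, snoc_zero',
            Finset.prod_Icc_succ_top (Nat.le_add_left 1 n), ext'_snoc_top,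
            Finset.prod_congr rfl fun i hi => by
              rw [ext'_snoc y k (mem_Icc.mp hi).2]]
          ring
        have hT : ∀ y : Fin (n + 1) → Fin K,
            0 ≤ chainW μvec P n y *
              (a₀ (y 0) ^ 2 * ∏ i ∈ Icc 1 n, a₁ (ext' n y i) ^ 2) := by
          intro y
          apply mul_nonneg (chainW_nonneg hμ0 hP0 n y)
          positivity
        calc ∑ k : Fin K, ∑ y : Fin (n + 1) → Fin K,
              chainW μvec P (n + 1) (Fin.snoc y k) *
                (a₀ ((Fin.snoc y k : Fin (n+2) → Fin K) 0) ^ 2 *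
                  ∏ i ∈ Icc 1 (n + 1), a₁ (ext' (n + 1) (Fin.snoc y k) i) ^ 2)
            = ∑ y : Fin (n + 1) → Fin K,
                (chainW μvec P n y *
                  (a₀ (y 0) ^ 2 * ∏ i ∈ Icc 1 n, a₁ (ext' n y i) ^ 2)) *
                  ∑ k : Fin K, P (y (Fin.last n)) k * a₁ k ^ 2 := by
              rw [Finset.sum_comm]
              exact Finset.sum_congr rfl fun y _ => by
                rw [Finset.mul_sum]
                exact Finset.sum_congr rfl fun k _ => h2 k y
          _ ≤ ∑ y : Fin (n + 1) → Fin K,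
                (chainW μvec P n y *
                  (a₀ (y 0) ^ 2 * ∏ i ∈ Icc 1 n, a₁ (ext' n y i) ^ 2)) * lam := by
              exact Finset.sum_le_sum fun y _ =>
                mul_le_mul_of_nonneg_left (hlam _) (hT y)
          _ = lam * ∑ y : Fin (n + 1) → Fin K,
                chainW μvec P n y *
                  (a₀ (y 0) ^ 2 * ∏ i ∈ Icc 1 n, a₁ (ext' n y i) ^ 2) := by
              rw [← Finset.sum_mul, mul_comm]
          _ ≤ lam * (lam ^ n * ∑ k, μvec k * a₀ k ^ 2) := by
              exact mul_le_mul_of_nonneg_left (ih n le_rfl) hlam0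
          _ = lam ^ (n + 1) * ∑ k, μvec k * a₀ k ^ 2 := by ring

end Stmt11Aux
/- With `A_m = (∏_{i=2}^{m+1} a₁(Z_i)) a₀(Z₁)` and `λ = max_k ∑_j P k j a₁(j)² < 1`,
for every `t ≥ 1`, `E[(∑_{m=0}^{t-1} A_m)²] ≤ 2 ((1 + ∑_k μ_k a₀(k)²) / (1 - √λ))²`.
Here `Z n` stands for `Z_{n+1}`. -/
open Stmt11Aux in
/-- With `A_m = (∏_{i=2}^{m+1} a₁(Z_i)) a₀(Z₁)` and `λ = max_k ∑_j P k j a₁(j)² < 1`,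
for every `t ≥ 1`, `E[(∑_{m=0}^{t-1} A_m)²] ≤ 2 ((1 + ∑_k μ_k a₀(k)²) / (1 - √λ))²`.
Here `Z n` stands for `Z_{n+1}`. -/
theorem stmt_11 (K : ℕ) (P : Matrix (Fin K) (Fin K) ℝ)
    (hP0 : ∀ i j, 0 ≤ P i j) (hP1 : ∀ i, ∑ j, P i j = 1)
    (μvec : Fin K → ℝ) (hμ0 : ∀ k, 0 ≤ μvec k) (hμ1 : ∑ k, μvec k = 1)
    (a₀ a₁ : Fin K → ℝ) (lam : ℝ)
    (hlam : IsGreatest (Set.range fun k : Fin K => ∑ j, P k j * a₁ j ^ 2) lam)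
    (hlt : lam < 1)
    {Ω : Type*} [MeasurableSpace Ω] (μpr : Measure Ω) [IsProbabilityMeasure μpr]
    (Z : ℕ → Ω → Fin K) (hZmeas : ∀ t, Measurable (Z t))
    (hZ : ∀ (n : ℕ) (z : Fin (n + 1) → Fin K),
      μpr {ω | ∀ i : Fin (n + 1), Z i ω = z i} =
        ENNReal.ofReal (μvec (z 0) * ∏ i : Fin n, P (z i.castSucc) (z i.succ)))
    (A : ℕ → Ω → ℝ)
    (hA : ∀ m ω, A m ω = (∏ i ∈ Finset.Icc 1 m, a₁ (Z i ω)) * a₀ (Z 0 ω))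
    (t : ℕ) (ht : 1 ≤ t) :
    ∫ ω, (∑ m ∈ Finset.range t, A m ω) ^ 2 ∂μpr
      ≤ 2 * ((1 + ∑ k, μvec k * a₀ k ^ 2) / (1 - Real.sqrt lam)) ^ 2 := by
  obtain ⟨n, rfl⟩ : ∃ n, t = n + 1 := ⟨t - 1, by omega⟩
  set S := ∑ k, μvec k * a₀ k ^ 2 with hS
  have hS0 : 0 ≤ S := Finset.sum_nonneg fun k _ => mul_nonneg (hμ0 k) (sq_nonneg _)
  have hlam0 : 0 ≤ lam := by
    obtain ⟨k, hk⟩ := hlam.1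
    exact hk ▸ Finset.sum_nonneg fun j _ => mul_nonneg (hP0 k j) (sq_nonneg _)
  have hlamle : ∀ k, ∑ j, P k j * a₁ j ^ 2 ≤ lam := fun k => hlam.2 ⟨k, rfl⟩
  have hsq1 : Real.sqrt lam < 1 := by
    rw [show (1 : ℝ) = Real.sqrt 1 from Real.sqrt_one.symm]
    exact Real.sqrt_lt_sqrt hlam0 hlt
  have hpos : 0 < 1 - Real.sqrt lam := by linarith
  let V : Ω → (Fin (n + 1) → Fin K) := fun ω i => Z i ω
  have hV : Measurable V := measurable_pi_lambda _ fun i => hZmeas i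
  let c : ℕ → (Fin (n + 1) → Fin K) → ℝ := fun m z =>
    (∏ i ∈ Finset.Icc 1 m, a₁ (ext' n z i)) * a₀ (z 0)
  let G : (Fin (n + 1) → Fin K) → ℝ := fun z => (∑ m ∈ Finset.range (n + 1), c m z) ^ 2
  have hAc : ∀ ω, (∑ m ∈ Finset.range (n + 1), A m ω) ^ 2 = G (V ω) := by
    intro ω
    show _ = (∑ m ∈ Finset.range (n + 1), c m (V ω)) ^ 2
    congr 1
    refine Finset.sum_congr rfl fun m hm => ?_
    rw [hA]
    show _ = (∏ i ∈ Finset.Icc 1 m, a₁ (ext' n (V ω) i)) * a₀ (V ω 0)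
    congr 1
    · refine Finset.prod_congr rfl fun i hi => ?_
      have h1 : i < n + 1 := by
        have h2 := (Finset.mem_Icc.mp hi).2
        have h3 := Finset.mem_range.mp hm
        omega
      rw [ext'_lt _ h1]
  have hprob : IsProbabilityMeasure (Measure.map V μpr) :=
    Measure.isProbabilityMeasure_map hV.aemeasurable
  have hint : ∫ ω, (∑ m ∈ Finset.range (n + 1), A m ω) ^ 2 ∂μpr
      = ∑ z : Fin (n + 1) → Fin K, chainW μvec P n z * G z := by
    simp only [hAc]
    rw [← integral_map hV.aemeasurable ((measurable_of_countable G).aestronglyMeasurable),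
      integral_fintype (Integrable.of_finite)]
    refine Finset.sum_congr rfl fun z _ => ?_
    rw [Measure.real, Measure.map_apply hV (measurableSet_singleton z)]
    have hpre : V ⁻¹' {z} = {ω | ∀ i : Fin (n + 1), Z i ω = z i} := by
      ext ω
      simp [V, funext_iff]
    rw [hpre, hZ n z,
      show (μvec (z 0) * ∏ i : Fin n, P (z i.castSucc) (z i.succ)) = chainW μvec P n z
        from rfl,
      ENNReal.toReal_ofReal (chainW_nonneg hμ0 hP0 n z), smul_eq_mul]
  let u : ℕ → EuclideanSpace ℝ (Fin (n + 1) → Fin K) := fun m => WithLp.toLp 2 fun z =>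
    Real.sqrt (chainW μvec P n z) * c m z
  let w : EuclideanSpace ℝ (Fin (n + 1) → Fin K) := WithLp.toLp 2 fun z =>
    Real.sqrt (chainW μvec P n z) * ∑ m ∈ Finset.range (n + 1), c m z
  have hw : w = ∑ m ∈ Finset.range (n + 1), u m := by
    ext z
    rw [WithLp.ofLp_sum, Finset.sum_apply]
    show Real.sqrt (chainW μvec P n z) * ∑ m ∈ Finset.range (n + 1), c m z = _
    rw [Finset.mul_sum]
  have normsq : ∀ x : EuclideanSpace ℝ (Fin (n + 1) → Fin K),
      ‖x‖ ^ 2 = ∑ z, x z ^ 2 := by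
    intro x
    rw [EuclideanSpace.norm_eq,
      Real.sq_sqrt (Finset.sum_nonneg fun z _ => sq_nonneg _)]
    exact Finset.sum_congr rfl fun z _ => by rw [Real.norm_eq_abs, sq_abs]
  have hGsum : ∑ z : Fin (n + 1) → Fin K, chainW μvec P n z * G z = ‖w‖ ^ 2 := by
    rw [normsq w]
    refine Finset.sum_congr rfl fun z _ => ?_
    show chainW μvec P n z * G z
      = (Real.sqrt (chainW μvec P n z) * ∑ m ∈ Finset.range (n + 1), c m z) ^ 2
    rw [mul_pow, Real.sq_sqrt (chainW_nonneg hμ0 hP0 n z)]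
  have hsqrtpow : ∀ m : ℕ, Real.sqrt (lam ^ m) = Real.sqrt lam ^ m := by
    intro m
    rw [← Real.sqrt_sq (pow_nonneg (Real.sqrt_nonneg lam) m)]
    congr 1
    rw [← pow_mul, mul_comm m 2, pow_mul, Real.sq_sqrt hlam0]
  have hum : ∀ m ≤ n, ‖u m‖ ≤ Real.sqrt lam ^ m * Real.sqrt S := by
    intro m hm
    have h1 : ‖u m‖ ^ 2 ≤ lam ^ m * S := by
      rw [normsq]
      refine le_trans (le_of_eq (Finset.sum_congr rfl fun z _ => ?_))
        (key P μvec a₀ a₁ lam hP0 hP1 hμ0 hlamle hlam0 n m hm)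
      show (Real.sqrt (chainW μvec P n z) * c m z) ^ 2 = _
      rw [mul_pow, Real.sq_sqrt (chainW_nonneg hμ0 hP0 n z)]
      show chainW μvec P n z * ((∏ i ∈ Finset.Icc 1 m, a₁ (ext' n z i)) * a₀ (z 0)) ^ 2 = _
      rw [mul_pow, ← Finset.prod_pow]
      ring
    calc ‖u m‖ = Real.sqrt (‖u m‖ ^ 2) := (Real.sqrt_sq (norm_nonneg _)).symm
      _ ≤ Real.sqrt (lam ^ m * S) := Real.sqrt_le_sqrt h1
      _ = Real.sqrt lam ^ m * Real.sqrt S := by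
          rw [Real.sqrt_mul (pow_nonneg hlam0 m), hsqrtpow]
  have hgeom : ∑ m ∈ Finset.range (n + 1), Real.sqrt lam ^ m ≤ 1 / (1 - Real.sqrt lam) := by
    rw [geom_sum_eq (ne_of_lt hsq1)]
    have heq : (Real.sqrt lam ^ (n + 1) - 1) / (Real.sqrt lam - 1)
        = (1 - Real.sqrt lam ^ (n + 1)) / (1 - Real.sqrt lam) := by
      rw [← neg_div_neg_eq]
      ring_nf
    rw [heq]
    gcongr
    have : 0 ≤ Real.sqrt lam ^ (n + 1) := pow_nonneg (Real.sqrt_nonneg _) _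
    linarith
  have hnorm : ‖w‖ ≤ Real.sqrt S / (1 - Real.sqrt lam) := by
    rw [hw]
    refine le_trans (norm_sum_le _ _) ?_
    calc ∑ m ∈ Finset.range (n + 1), ‖u m‖
        ≤ ∑ m ∈ Finset.range (n + 1), Real.sqrt lam ^ m * Real.sqrt S :=
          Finset.sum_le_sum fun m hm => hum m (Nat.lt_succ_iff.mp (Finset.mem_range.mp hm))
      _ = (∑ m ∈ Finset.range (n + 1), Real.sqrt lam ^ m) * Real.sqrt S := by
          rw [Finset.sum_mul]
      _ ≤ (1 / (1 - Real.sqrt lam)) * Real.sqrt S := by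
          exact mul_le_mul_of_nonneg_right hgeom (Real.sqrt_nonneg _)
      _ = Real.sqrt S / (1 - Real.sqrt lam) := by ring
  rw [hint, hGsum]
  calc ‖w‖ ^ 2 ≤ (Real.sqrt S / (1 - Real.sqrt lam)) ^ 2 :=
      pow_le_pow_left₀ (norm_nonneg w) hnorm 2
    _ = S / (1 - Real.sqrt lam) ^ 2 := by
        rw [div_pow, Real.sq_sqrt hS0]
    _ ≤ (2 * (1 + S) ^ 2) / (1 - Real.sqrt lam) ^ 2 := by
        gcongr
        nlinarith [sq_nonneg S, hS0]
    _ = 2 * ((1 + S) / (1 - Real.sqrt lam)) ^ 2 := by rw [div_pow, mul_div_assoc]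
end

section
/- Let P be a K×K row-stochastic real matrix, μ a probability vector on {1,…,K}, a₁, σ : {1,…,K} → ℝ, and λ = max_{1≤k≤K} Σ_{j=1}^{K} P_{kj} a₁(j)². Let (Z_t)_{t≥1} be a Markov chain on {1,…,K} with transition matrix P and initial distribution μ, and let (ε_m)_{m≥0} be i.i.d. standard normal random variables independent of (Z_t)_{t≥1}. If λ < 1, then for every t ≥ 1, E[(Σ_{m=0}^{t-1} |(Π_{i=2}^{m+1} a₁(Z_i)) · σ(Z₁) · ε_m|)²] ≤ 2 · ((1 + μ′ σ̄² 𝟙) / (1 − λ^{1/2}))², where μ′ σ̄² 𝟙 = Σ_{k=1}^{K} μ_k σ(k)². -/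
open MeasureTheory ProbabilityTheory Real

lemma aux_gauss_sq : Integrable (fun x : ℝ => x ^ 2) (gaussianReal 0 1) ∧
    ∫ x, x ^ 2 ∂(gaussianReal 0 1) ≤ 8 := by
  have hpdf : ∀ x : ℝ, gaussianPDFReal 0 1 x = (Real.sqrt (2 * π))⁻¹ * Real.exp (-(x ^ 2) / 2) := by
    intro x
    simp [gaussianPDFReal, sq]
  have hmeas : Measurable fun x => (gaussianPDFReal 0 1 x).toNNReal :=
    (measurable_gaussianPDFReal 0 1).real_toNNReal
  have hrepr : gaussianReal 0 1 =
      volume.withDensity (fun x => ((gaussianPDFReal 0 1 x).toNNReal : ENNReal)) := by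
    rw [gaussianReal_of_var_ne_zero _ one_ne_zero]; rfl
  have hc : (0:ℝ) < Real.sqrt (2 * π) := Real.sqrt_pos.2 (by positivity)
  set c : ℝ := (Real.sqrt (2 * π))⁻¹ with hcdef
  have hc0 : 0 ≤ c := le_of_lt (inv_pos.2 hc)
  have hint : Integrable (fun x : ℝ => 4 * c * Real.exp (-(4⁻¹) * x ^ 2)) volume :=
    (integrable_exp_neg_mul_sq (by norm_num : (0:ℝ) < 4⁻¹)).const_mul _
  have hbound : ∀ x : ℝ, gaussianPDFReal 0 1 x * x ^ 2 ≤ 4 * c * Real.exp (-(4⁻¹) * x ^ 2) := by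
    intro x
    rw [hpdf]
    have h1 : x ^ 2 ≤ 4 * Real.exp (x ^ 2 / 4) := by
      have := Real.add_one_le_exp (x ^ 2 / 4)
      nlinarith [Real.exp_pos (x ^ 2 / 4), sq_nonneg x]
    have h2 : Real.exp (x ^ 2 / 4) * Real.exp (-(x ^ 2) / 2) = Real.exp (-(4⁻¹) * x ^ 2) := by
      rw [← Real.exp_add]; congr 1; ring
    have key : c * Real.exp (-(x ^ 2) / 2) * x ^ 2
        ≤ c * Real.exp (-(x ^ 2) / 2) * (4 * Real.exp (x ^ 2 / 4)) :=
      mul_le_mul_of_nonneg_left h1 (by positivity)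
    calc c * Real.exp (-(x ^ 2) / 2) * x ^ 2
        ≤ c * Real.exp (-(x ^ 2) / 2) * (4 * Real.exp (x ^ 2 / 4)) := key
      _ = 4 * c * (Real.exp (x ^ 2 / 4) * Real.exp (-(x ^ 2) / 2)) := by ring
      _ = 4 * c * Real.exp (-(4⁻¹) * x ^ 2) := by rw [h2]
  -- integrability of the density-weighted square
  have hg_meas : Measurable fun x : ℝ => gaussianPDFReal 0 1 x * x ^ 2 :=
    (measurable_gaussianPDFReal 0 1).mul (measurable_id.pow_const 2)
  have hg_nonneg : ∀ x : ℝ, 0 ≤ gaussianPDFReal 0 1 x * x ^ 2 := fun x =>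
    mul_nonneg (gaussianPDFReal_nonneg _ _ _) (sq_nonneg _)
  have hg_int : Integrable (fun x : ℝ => gaussianPDFReal 0 1 x * x ^ 2) volume := by
    refine hint.mono' hg_meas.aestronglyMeasurable (ae_of_all _ fun x => ?_)
    rw [Real.norm_eq_abs, abs_of_nonneg (hg_nonneg x)]
    exact hbound x
  have hsmul : ∀ x : ℝ, (gaussianPDFReal 0 1 x).toNNReal • (x ^ 2)
      = gaussianPDFReal 0 1 x * x ^ 2 := by
    intro x
    simp [NNReal.smul_def, Real.coe_toNNReal _ (gaussianPDFReal_nonneg 0 1 x)]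
  constructor
  · rw [hrepr, integrable_withDensity_iff_integrable_smul hmeas]
    refine hg_int.congr (ae_of_all _ fun x => ?_)
    exact (hsmul x).symm
  · rw [hrepr, integral_withDensity_eq_integral_smul hmeas]
    have heq : ∫ x : ℝ, (gaussianPDFReal 0 1 x).toNNReal • (x ^ 2) ∂volume
        = ∫ x : ℝ, gaussianPDFReal 0 1 x * x ^ 2 ∂volume :=
      integral_congr_ae (ae_of_all _ fun x => hsmul x)
    rw [heq]
    have hle : ∫ x : ℝ, gaussianPDFReal 0 1 x * x ^ 2 ∂volume
        ≤ ∫ x : ℝ, 4 * c * Real.exp (-(4⁻¹) * x ^ 2) ∂volume :=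
      integral_mono hg_int hint fun x => hbound x
    refine hle.trans ?_
    rw [integral_const_mul, integral_gaussian]
    have h4 : Real.sqrt (π / 4⁻¹) = 2 * Real.sqrt π := by
      rw [show π / 4⁻¹ = 2 ^ 2 * π by ring, Real.sqrt_mul (by positivity),
        Real.sqrt_sq (by norm_num : (0:ℝ) ≤ 2)]
    rw [h4, hcdef]
    have h2pi : Real.sqrt (2 * π) = Real.sqrt 2 * Real.sqrt π := Real.sqrt_mul (by norm_num) _
    rw [h2pi]
    have hs2 : (1:ℝ) ≤ Real.sqrt 2 := by
      nlinarith [Real.sq_sqrt (by norm_num : (0:ℝ) ≤ 2), Real.sqrt_nonneg 2]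
    have hspi : (0:ℝ) < Real.sqrt π := Real.sqrt_pos.2 pi_pos
    rw [mul_inv]
    have hinv : (Real.sqrt π)⁻¹ * Real.sqrt π = 1 := inv_mul_cancel₀ hspi.ne'
    have h2inv : (Real.sqrt 2)⁻¹ ≤ 1 := inv_le_one_of_one_le₀ hs2
    have hkey : 4 * ((Real.sqrt 2)⁻¹ * (Real.sqrt π)⁻¹) * (2 * Real.sqrt π)
        = 8 * (Real.sqrt 2)⁻¹ * ((Real.sqrt π)⁻¹ * Real.sqrt π) := by ring
    rw [hkey, hinv, mul_one]
    nlinarith [inv_nonneg.2 (Real.sqrt_nonneg 2)]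
open MeasureTheory

lemma aux_pathsum {K : ℕ} (P : Matrix (Fin K) (Fin K) ℝ) (μvec a₁ σv : Fin K → ℝ) (lam : ℝ)
    (hP0 : ∀ i j, 0 ≤ P i j) (hμ0 : ∀ k, 0 ≤ μvec k)
    (hlam : ∀ k, ∑ j, P k j * a₁ j ^ 2 ≤ lam) (hlam0 : 0 ≤ lam) (m : ℕ) :
    ∑ z : Fin (m + 1) → Fin K,
      (μvec (z 0) * σv (z 0) ^ 2) *
        ∏ i : Fin m, (P (z i.castSucc) (z i.succ) * a₁ (z i.succ) ^ 2)
      ≤ (∑ k, μvec k * σv k ^ 2) * lam ^ m := by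
  induction m with
  | zero =>
    rw [pow_zero, mul_one]
    refine le_of_eq (Fintype.sum_equiv (Equiv.funUnique (Fin 1) (Fin K)) _ _ fun z => ?_)
    simp [Equiv.funUnique]
  | succ m ih =>
    have key : ∀ (y : Fin (m + 1) → Fin K) (k : Fin K),
        (μvec ((Fin.snoc y k : Fin (m + 2) → Fin K) 0) *
            σv ((Fin.snoc y k : Fin (m + 2) → Fin K) 0) ^ 2) *
          ∏ i : Fin (m + 1), (P ((Fin.snoc y k : Fin (m + 2) → Fin K) i.castSucc)
              ((Fin.snoc y k : Fin (m + 2) → Fin K) i.succ) *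
            a₁ ((Fin.snoc y k : Fin (m + 2) → Fin K) i.succ) ^ 2)
        = ((μvec (y 0) * σv (y 0) ^ 2) *
            ∏ i : Fin m, (P (y i.castSucc) (y i.succ) * a₁ (y i.succ) ^ 2)) *
          (P (y (Fin.last m)) k * a₁ k ^ 2) := by
      intro y k
      rw [Fin.prod_univ_castSucc]
      have h0 : (Fin.snoc y k : Fin (m + 2) → Fin K) 0 = y 0 := by
        rw [show (0 : Fin (m + 2)) = Fin.castSucc 0 by rfl, Fin.snoc_castSucc]
      have hmid : ∀ i : Fin m,
          P ((Fin.snoc y k : Fin (m + 2) → Fin K) i.castSucc.castSucc)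
              ((Fin.snoc y k : Fin (m + 2) → Fin K) i.castSucc.succ) *
            a₁ ((Fin.snoc y k : Fin (m + 2) → Fin K) i.castSucc.succ) ^ 2
          = P (y i.castSucc) (y i.succ) * a₁ (y i.succ) ^ 2 := by
        intro i
        rw [Fin.succ_castSucc, Fin.snoc_castSucc, Fin.snoc_castSucc]
      have hlast : P ((Fin.snoc y k : Fin (m + 2) → Fin K) (Fin.last m).castSucc)
            ((Fin.snoc y k : Fin (m + 2) → Fin K) (Fin.last m).succ) *
          a₁ ((Fin.snoc y k : Fin (m + 2) → Fin K) (Fin.last m).succ) ^ 2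
          = P (y (Fin.last m)) k * a₁ k ^ 2 := by
        rw [Fin.succ_last, Fin.snoc_last, Fin.snoc_castSucc]
      rw [h0, hlast, Finset.prod_congr rfl fun i _ => hmid i]
      ring
    calc ∑ z : Fin (m + 2) → Fin K,
          (μvec (z 0) * σv (z 0) ^ 2) *
            ∏ i : Fin (m + 1), (P (z i.castSucc) (z i.succ) * a₁ (z i.succ) ^ 2)
        = ∑ p : Fin K × (Fin (m + 1) → Fin K),
            ((μvec (p.2 0) * σv (p.2 0) ^ 2) *
              ∏ i : Fin m, (P (p.2 i.castSucc) (p.2 i.succ) * a₁ (p.2 i.succ) ^ 2)) *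
            (P (p.2 (Fin.last m)) p.1 * a₁ p.1 ^ 2) := by
          refine (Fintype.sum_equiv (Fin.snocEquiv (fun _ => Fin K)) _ _ fun p => ?_).symm
          simp only [Fin.snocEquiv_apply]
          exact (key p.2 p.1).symm
      _ = ∑ y : Fin (m + 1) → Fin K,
            ((μvec (y 0) * σv (y 0) ^ 2) *
              ∏ i : Fin m, (P (y i.castSucc) (y i.succ) * a₁ (y i.succ) ^ 2)) *
            ∑ k, (P (y (Fin.last m)) k * a₁ k ^ 2) := by
          rw [Fintype.sum_prod_type_right]
          exact Finset.sum_congr rfl fun y _ => by rw [Finset.mul_sum]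
      _ ≤ ∑ y : Fin (m + 1) → Fin K,
            ((μvec (y 0) * σv (y 0) ^ 2) *
              ∏ i : Fin m, (P (y i.castSucc) (y i.succ) * a₁ (y i.succ) ^ 2)) * lam := by
          refine Finset.sum_le_sum fun y _ => mul_le_mul_of_nonneg_left (hlam _) ?_
          exact mul_nonneg (mul_nonneg (hμ0 _) (sq_nonneg _))
            (Finset.prod_nonneg fun i _ => mul_nonneg (hP0 _ _) (sq_nonneg _))
      _ ≤ ((∑ k, μvec k * σv k ^ 2) * lam ^ m) * lam := by
          rw [← Finset.sum_mul]
          exact mul_le_mul_of_nonneg_right ih hlam0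
      _ = (∑ k, μvec k * σv k ^ 2) * lam ^ (m + 1) := by ring

lemma aux_fin_integral {Ω : Type*} [MeasurableSpace Ω] (μpr : Measure Ω) [IsProbabilityMeasure μpr]
    {K n : ℕ} (Z : ℕ → Ω → Fin K) (hZmeas : ∀ t, Measurable (Z t))
    (f : (Fin (n + 1) → Fin K) → ℝ) :
    ∫ ω, f (fun i : Fin (n + 1) => Z i ω) ∂μpr
      = ∑ z : Fin (n + 1) → Fin K,
          f z * (μpr {ω | ∀ i : Fin (n + 1), Z i ω = z i}).toReal := by
  have hmeasS : ∀ z : Fin (n + 1) → Fin K,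
      MeasurableSet {ω | ∀ i : Fin (n + 1), Z i ω = z i} := by
    intro z
    have : {ω | ∀ i : Fin (n + 1), Z i ω = z i}
        = ⋂ i : Fin (n + 1), (Z i) ⁻¹' {z i} := by
      ext ω; simp [Set.mem_iInter]
    rw [this]
    exact MeasurableSet.iInter fun i => (hZmeas i) (measurableSet_singleton _)
  have hfun : (fun ω => f (fun i : Fin (n + 1) => Z i ω))
      = fun ω => ∑ z : Fin (n + 1) → Fin K,
          Set.indicator {ω | ∀ i : Fin (n + 1), Z i ω = z i} (fun _ => f z) ω := by
    funext ω
    rw [Finset.sum_eq_single (fun i : Fin (n + 1) => Z i ω)]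
    · rw [Set.indicator_of_mem]
      exact fun i => rfl
    · intro z _ hz
      rw [Set.indicator_of_notMem]
      intro h
      exact hz (funext fun i => (h i).symm)
    · intro h
      exact absurd (Finset.mem_univ _) h
  rw [hfun, integral_finset_sum]
  · refine Finset.sum_congr rfl fun z _ => ?_
    rw [integral_indicator_const _ (hmeasS z), smul_eq_mul, mul_comm, measureReal_def]
  · intro z _
    exact (integrable_const _).indicator (hmeasS z)
/-- Noise-term bound (Equation (19) of the paper): if `λ = max_k ∑_j P k j a₁(j)² < 1`,
`(ε_m)` are i.i.d. standard normal independent of the chain `(Z_t)`, then for every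
`t ≥ 1`, `E[(∑_{m=0}^{t-1} |(∏_{i=2}^{m+1} a₁(Z_i)) σ(Z₁) ε_m|)²]
  ≤ 2 ((1 + ∑_k μ_k σ(k)²) / (1 - √λ))²`.  Here `Z n` stands for `Z_{n+1}`. -/
theorem stmt_15 (K : ℕ) (P : Matrix (Fin K) (Fin K) ℝ)
    (hP0 : ∀ i j, 0 ≤ P i j) (hP1 : ∀ i, ∑ j, P i j = 1)
    (μvec : Fin K → ℝ) (hμ0 : ∀ k, 0 ≤ μvec k) (hμ1 : ∑ k, μvec k = 1)
    (a₁ σv : Fin K → ℝ) (lam : ℝ)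
    (hlam : IsGreatest (Set.range fun k : Fin K => ∑ j, P k j * a₁ j ^ 2) lam)
    (hlt : lam < 1)
    {Ω : Type*} [MeasurableSpace Ω] (μpr : Measure Ω) [IsProbabilityMeasure μpr]
    (Z : ℕ → Ω → Fin K) (ε : ℕ → Ω → ℝ)
    (hZmeas : ∀ t, Measurable (Z t)) (hεmeas : ∀ t, Measurable (ε t))
    (hZ : ∀ (n : ℕ) (z : Fin (n + 1) → Fin K),
      μpr {ω | ∀ i : Fin (n + 1), Z i ω = z i} =
        ENNReal.ofReal (μvec (z 0) * ∏ i : Fin n, P (z i.castSucc) (z i.succ)))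
    (hεindep : ProbabilityTheory.iIndepFun ε μpr)
    (hεgauss : ∀ m, Measure.map (ε m) μpr = ProbabilityTheory.gaussianReal 0 1)
    (hZε : ProbabilityTheory.Indep
      (⨆ t, MeasurableSpace.comap (Z t) inferInstance)
      (⨆ m, MeasurableSpace.comap (ε m) inferInstance) μpr)
    (t : ℕ) (ht : 1 ≤ t) :
    ∫ ω, (∑ m ∈ Finset.range t,
        |(∏ i ∈ Finset.Icc 1 m, a₁ (Z i ω)) * σv (Z 0 ω) * ε m ω|) ^ 2 ∂μpr
      ≤ 2 * ((1 + ∑ k, μvec k * σv k ^ 2) / (1 - Real.sqrt lam)) ^ 2 := by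
  classical
  set S : ℝ := ∑ k, μvec k * σv k ^ 2 with hSdef
  have hS0 : 0 ≤ S := Finset.sum_nonneg fun k _ => mul_nonneg (hμ0 k) (sq_nonneg _)
  obtain ⟨k₀, hk₀⟩ := hlam.1
  have hlam0 : 0 ≤ lam :=
    hk₀ ▸ Finset.sum_nonneg fun j _ => mul_nonneg (hP0 _ _) (sq_nonneg _)
  have hlamub : ∀ k : Fin K, ∑ j, P k j * a₁ j ^ 2 ≤ lam := fun k => hlam.2 ⟨k, rfl⟩
  have hr0 : 0 ≤ Real.sqrt lam := Real.sqrt_nonneg _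
  have hr1 : Real.sqrt lam < 1 := by
    have := Real.sqrt_lt_sqrt hlam0 hlt
    rwa [Real.sqrt_one] at this
  set r : ℝ := Real.sqrt lam with hrdef
  have hD : 0 < 1 - r := by linarith
  set F : ℕ → Ω → ℝ :=
    fun m ω => |(∏ i ∈ Finset.Icc 1 m, a₁ (Z i ω)) * σv (Z 0 ω) * ε m ω| with hFdef
  -- per-m L² facts
  have key : ∀ m : ℕ, MemLp (F m) 2 μpr ∧ ∫ ω, F m ω ^ 2 ∂μpr ≤ 8 * S * lam ^ m := by
    intro m
    set X : Ω → ℝ := fun ω => (∏ i ∈ Finset.Icc 1 m, a₁ (Z i ω)) * σv (Z 0 ω) with hXdef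
    set g : (Fin (m + 1) → Fin K) → ℝ :=
      fun z => (∏ i : Fin m, a₁ (z i.succ)) * σv (z 0) with hgdef
    have natprod : ∀ h : ℕ → ℝ, ∏ i ∈ Finset.Icc 1 m, h i = ∏ i : Fin m, h (↑i + 1) := by
      intro h
      rw [Fin.prod_univ_eq_prod_range (fun i => h (i + 1)) m,
        show Finset.Icc 1 m = Finset.Ico 1 (m + 1) by rw [Finset.Ico_add_one_right_eq_Icc],
        Finset.prod_Ico_eq_prod_range]
      simp [add_comm]
    have hXg : ∀ ω, X ω = g (fun i : Fin (m + 1) => Z i ω) := by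
      intro ω
      rw [hXdef, hgdef]
      simp only [Fin.val_succ, Fin.val_zero]
      rw [natprod (fun i => a₁ (Z i ω))]
    have hvec : Measurable (fun ω (i : Fin (m + 1)) => Z i ω) :=
      measurable_pi_lambda _ fun i => hZmeas i
    have hgm : Measurable g := measurable_of_countable g
    have hXeq : X = fun ω => g (fun i : Fin (m + 1) => Z i ω) := funext hXg
    have hX : Measurable X := hXeq ▸ hgm.comp hvec
    have hXbdd : ∀ ω, |X ω| ≤ ∑ z : Fin (m + 1) → Fin K, |g z| := by
      intro ω
      rw [hXg ω]
      exact Finset.single_le_sum (f := fun z => |g z|) (fun z _ => abs_nonneg _)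
        (Finset.mem_univ (fun i : Fin (m + 1) => Z i ω))
    have hsqm : Measurable fun x : ℝ => x ^ 2 := by fun_prop
    -- ε moments
    have hε2int : Integrable (fun ω => ε m ω ^ 2) μpr := by
      have h := aux_gauss_sq.1
      rw [← hεgauss m] at h
      exact (integrable_map_measure hsqm.aestronglyMeasurable
        (hεmeas m).aemeasurable).mp h
    have hε2le : ∫ ω, ε m ω ^ 2 ∂μpr ≤ 8 := by
      have h : ∫ ω, ε m ω ^ 2 ∂μpr = ∫ x, x ^ 2 ∂(Measure.map (ε m) μpr) := by
        rw [integral_map (hεmeas m).aemeasurable hsqm.aestronglyMeasurable]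
      rw [h, hεgauss m]
      exact aux_gauss_sq.2
    have hε2nn : 0 ≤ ∫ ω, ε m ω ^ 2 ∂μpr := integral_nonneg fun ω => sq_nonneg _
    -- product integrable
    have hprod_int : Integrable (fun ω => X ω ^ 2 * ε m ω ^ 2) μpr := by
      refine hε2int.bdd_mul (hX.pow_const 2).aestronglyMeasurable
        (c := (∑ z : Fin (m + 1) → Fin K, |g z|) ^ 2) (ae_of_all _ fun ω => ?_)
      rw [Real.norm_eq_abs, abs_of_nonneg (sq_nonneg _), ← sq_abs]
      exact pow_le_pow_left₀ (abs_nonneg _) (hXbdd ω) 2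
    -- independence
    have hXcomap : MeasurableSpace.comap X inferInstance
        ≤ ⨆ t, MeasurableSpace.comap (Z t) inferInstance := by
      have hXc : MeasurableSpace.comap X inferInstance
          = MeasurableSpace.comap (fun ω (i : Fin (m + 1)) => Z i ω)
              (MeasurableSpace.comap g inferInstance) := by
        rw [MeasurableSpace.comap_comp]
        exact congrArg (fun f => MeasurableSpace.comap f inferInstance) hXeq
      rw [hXc]
      refine le_trans (MeasurableSpace.comap_mono (measurable_iff_comap_le.mp hgm)) ?_
      rw [show (MeasurableSpace.pi : MeasurableSpace (Fin (m + 1) → Fin K))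
          = ⨆ i : Fin (m + 1), MeasurableSpace.comap
              (fun z : Fin (m + 1) → Fin K => z i) inferInstance from rfl,
        MeasurableSpace.comap_iSup]
      refine iSup_le fun i => ?_
      rw [MeasurableSpace.comap_comp]
      exact le_iSup (fun t => MeasurableSpace.comap (Z t) inferInstance) (i : ℕ)
    have hεcomap : MeasurableSpace.comap (ε m) inferInstance
        ≤ ⨆ n, MeasurableSpace.comap (ε n) inferInstance :=
      le_iSup (fun n => MeasurableSpace.comap (ε n) inferInstance) m
    have hind : ProbabilityTheory.IndepFun X (ε m) μpr :=
      ProbabilityTheory.indep_of_indep_of_le_left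
        (ProbabilityTheory.indep_of_indep_of_le_right hZε hεcomap) hXcomap
    have hind2 : ProbabilityTheory.IndepFun (fun ω => X ω ^ 2) (fun ω => ε m ω ^ 2) μpr :=
      hind.comp hsqm hsqm
    have hmul : ∫ ω, X ω ^ 2 * ε m ω ^ 2 ∂μpr
        = (∫ ω, X ω ^ 2 ∂μpr) * ∫ ω, ε m ω ^ 2 ∂μpr :=
      hind2.integral_fun_mul_eq_mul_integral (hX.pow_const 2).aestronglyMeasurable
        ((hεmeas m).pow_const 2).aestronglyMeasurable
    -- chain moment
    have hX2 : ∫ ω, X ω ^ 2 ∂μpr ≤ S * lam ^ m := by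
      calc ∫ ω, X ω ^ 2 ∂μpr
          = ∫ ω, (fun z : Fin (m + 1) → Fin K => g z ^ 2) (fun i : Fin (m + 1) => Z i ω) ∂μpr := by
            refine integral_congr_ae (ae_of_all _ fun ω => ?_)
            simp only
            rw [hXg ω]
        _ = ∑ z : Fin (m + 1) → Fin K,
              g z ^ 2 * (μpr {ω | ∀ i : Fin (m + 1), Z i ω = z i}).toReal :=
            aux_fin_integral (K := K) (n := m) μpr Z hZmeas (fun z => g z ^ 2)
        _ = ∑ z : Fin (m + 1) → Fin K,
              (μvec (z 0) * σv (z 0) ^ 2) *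
                ∏ i : Fin m, (P (z i.castSucc) (z i.succ) * a₁ (z i.succ) ^ 2) := by
            refine Finset.sum_congr rfl fun z _ => ?_
            rw [hZ m z, ENNReal.toReal_ofReal
              (mul_nonneg (hμ0 _) (Finset.prod_nonneg fun i _ => hP0 _ _))]
            rw [hgdef]
            simp only
            rw [mul_pow, ← Finset.prod_pow, Finset.prod_mul_distrib]
            ring
        _ ≤ S * lam ^ m := aux_pathsum P μvec a₁ σv lam hP0 hμ0 hlamub hlam0 m
    have hX2nn : 0 ≤ ∫ ω, X ω ^ 2 ∂μpr := integral_nonneg fun ω => sq_nonneg _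
    have hF2 : ∀ ω, F m ω ^ 2 = X ω ^ 2 * ε m ω ^ 2 := by
      intro ω
      rw [hFdef, hXdef]
      simp only
      rw [sq_abs, mul_pow]
    constructor
    · refine (memLp_two_iff_integrable_sq ?_).mpr ?_
      · exact ((hX.mul (hεmeas m)).abs).aestronglyMeasurable
      · exact hprod_int.congr (ae_of_all _ fun ω => (hF2 ω).symm)
    · calc ∫ ω, F m ω ^ 2 ∂μpr = ∫ ω, X ω ^ 2 * ε m ω ^ 2 ∂μpr :=
            integral_congr_ae (ae_of_all _ fun ω => hF2 ω)
        _ = (∫ ω, X ω ^ 2 ∂μpr) * ∫ ω, ε m ω ^ 2 ∂μpr := hmul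
        _ ≤ (S * lam ^ m) * 8 := by
            exact mul_le_mul hX2 hε2le hε2nn (mul_nonneg hS0 (pow_nonneg hlam0 m))
        _ = 8 * S * lam ^ m := by ring
  -- norm-square helper
  have norm_sq : ∀ (f : Ω → ℝ) (hf : MemLp f 2 μpr),
      ‖hf.toLp f‖ ^ 2 = ∫ ω, f ω ^ 2 ∂μpr := by
    intro f hf
    rw [← real_inner_self_eq_norm_sq, L2.inner_def]
    refine integral_congr_ae ?_
    filter_upwards [hf.coeFn_toLp] with ω hω
    rw [hω]
    simp [RCLike.inner_apply, sq]
  -- assemble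
  have hmemS : MemLp (fun ω => ∑ m ∈ Finset.range t, F m ω) 2 μpr :=
    memLp_finset_sum _ fun m _ => (key m).1
  show ∫ ω, (∑ m ∈ Finset.range t, F m ω) ^ 2 ∂μpr ≤ 2 * ((1 + S) / (1 - r)) ^ 2
  have hmain : ∫ ω, (∑ m ∈ Finset.range t, F m ω) ^ 2 ∂μpr
      = ‖hmemS.toLp _‖ ^ 2 := (norm_sq _ hmemS).symm
  rw [hmain]
  -- bound the norm
  have hnorm_m : ∀ m : ℕ, ((eLpNorm (F m) 2 μpr).toReal : ℝ)
      ≤ Real.sqrt (8 * S) * r ^ m := by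
    intro m
    have h1 : (eLpNorm (F m) 2 μpr).toReal = ‖((key m).1).toLp (F m)‖ :=
      (Lp.norm_toLp _ _).symm
    rw [h1]
    have h2 : ‖((key m).1).toLp (F m)‖ ^ 2 ≤ 8 * S * lam ^ m :=
      (norm_sq _ (key m).1).le.trans (key m).2
    have h3 : ‖((key m).1).toLp (F m)‖ ≤ Real.sqrt (8 * S * lam ^ m) := by
      have := Real.sqrt_le_sqrt h2
      rwa [Real.sqrt_sq (norm_nonneg _)] at this
    refine h3.trans (le_of_eq ?_)
    rw [Real.sqrt_mul (by positivity), hrdef]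
    congr 1
    rw [show lam ^ m = (Real.sqrt lam ^ m) ^ 2 by
      rw [← pow_mul, mul_comm m 2, pow_mul, Real.sq_sqrt hlam0]]
    exact Real.sqrt_sq (pow_nonneg (Real.sqrt_nonneg _) m)
  have hsum_lt_top : ∀ m ∈ Finset.range t, eLpNorm (F m) 2 μpr ≠ ⊤ :=
    fun m _ => ((key m).1).2.ne
  have hnorm : ‖hmemS.toLp _‖ ≤ Real.sqrt (8 * S) * (1 / (1 - r)) := by
    rw [Lp.norm_toLp]
    have hfun : (fun ω => ∑ m ∈ Finset.range t, F m ω) = ∑ m ∈ Finset.range t, F m := by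
      funext ω; rw [Finset.sum_apply]
    have h1 : eLpNorm (fun ω => ∑ m ∈ Finset.range t, F m ω) 2 μpr
        ≤ ∑ m ∈ Finset.range t, eLpNorm (F m) 2 μpr := by
      rw [hfun]
      exact eLpNorm_sum_le (fun m _ => ((key m).1).1) one_le_two
    have h2 : (eLpNorm (fun ω => ∑ m ∈ Finset.range t, F m ω) 2 μpr).toReal
        ≤ ∑ m ∈ Finset.range t, (eLpNorm (F m) 2 μpr).toReal := by
      rw [← ENNReal.toReal_sum hsum_lt_top]
      exact ENNReal.toReal_mono (ENNReal.sum_ne_top.mpr hsum_lt_top) h1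
    refine h2.trans ?_
    calc ∑ m ∈ Finset.range t, (eLpNorm (F m) 2 μpr).toReal
        ≤ ∑ m ∈ Finset.range t, Real.sqrt (8 * S) * r ^ m :=
          Finset.sum_le_sum fun m _ => hnorm_m m
      _ = Real.sqrt (8 * S) * ∑ m ∈ Finset.range t, r ^ m := by rw [← Finset.mul_sum]
      _ ≤ Real.sqrt (8 * S) * (1 / (1 - r)) := by
          refine mul_le_mul_of_nonneg_left ?_ (Real.sqrt_nonneg _)
          rw [geom_sum_eq (ne_of_lt hr1) t,
            show (r ^ t - 1) / (r - 1) = (1 - r ^ t) / (1 - r) by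
              rw [← neg_div_neg_eq]; ring_nf]
          rw [div_le_div_iff₀ hD hD]
          have : 0 ≤ r ^ t := pow_nonneg hr0 t
          nlinarith
  have hfinal : ‖hmemS.toLp _‖ ^ 2 ≤ (Real.sqrt (8 * S) * (1 / (1 - r))) ^ 2 :=
    pow_le_pow_left₀ (norm_nonneg _) hnorm 2
  refine hfinal.trans ?_
  have e1 : (Real.sqrt (8 * S) * (1 / (1 - r))) ^ 2 = 8 * S * (1 / (1 - r)) ^ 2 := by
    rw [mul_pow, Real.sq_sqrt (by positivity)]
  have e2 : 2 * ((1 + S) / (1 - r)) ^ 2 = (2 * (1 + S) ^ 2) * (1 / (1 - r)) ^ 2 := by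
    rw [div_pow, div_pow, one_pow]
    ring
  rw [e1, e2]
  refine mul_le_mul_of_nonneg_right ?_ (sq_nonneg _)
  nlinarith [sq_nonneg (1 - S)]
end

section
/- Let P be a K×K row-stochastic real matrix, μ a probability vector on {1,…,K}, a₀, a₁, σ : {1,…,K} → ℝ, λ = max_{1≤k≤K} Σ_{j=1}^{K} P_{kj} a₁(j)², and let φ₁⁺ = diag(|a₁(1)|,…,|a₁(K)|). Let (Z_t)_{t≥1} be a Markov chain on {1,…,K} with transition matrix P and initial distribution μ, and let (ε_m)_{m≥0} be i.i.d. standard normal random variables independent of (Z_t)_{t≥1}. Assume λ < 1 and every complex eigenvalue of P φ₁⁺ has modulus strictly less than 1. Then the random series S = Σ_{m=0}^{∞} (Π_{i=2}^{m+1} a₁(Z_i)) · (a₀(Z₁) + σ(Z₁) ε_m) converges absolutely almost surely, and E[S²] < ∞. -/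
open MeasureTheory
open scoped ENNReal NNReal

section Aux

open ProbabilityTheory Finset

private lemma gauss_int_aux (k : ℕ) :
    Integrable (fun x : ℝ => x ^ k) (gaussianReal 0 1) := by
  rw [gaussianReal_of_var_ne_zero 0 one_ne_zero]
  rw [integrable_withDensity_iff (measurable_gaussianPDF 0 1)
    (ae_of_all _ fun x => ENNReal.ofReal_lt_top)]
  have h0 : Integrable (fun x : ℝ => x ^ (k : ℝ) * Real.exp (-(2⁻¹) * x ^ 2)) :=
    integrable_rpow_mul_exp_neg_mul_sq (by norm_num)
      (lt_of_lt_of_le neg_one_lt_zero (Nat.cast_nonneg k))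
  have h1 : Integrable (fun x : ℝ => x ^ k * Real.exp (-(2⁻¹) * x ^ 2)) := by
    simpa [Real.rpow_natCast] using h0
  have h := h1.mul_const (Real.sqrt (2 * Real.pi))⁻¹
  refine h.congr (Filter.Eventually.of_forall fun x => ?_)
  simp only [gaussianPDF, ENNReal.toReal_ofReal (gaussianPDFReal_nonneg _ _ _)]
  simp only [gaussianPDFReal, NNReal.coe_one, mul_one, sub_zero]
  rw [show -x ^ 2 / 2 = -(2⁻¹) * x ^ 2 by ring]
  ring

private lemma pathSum_le {K : ℕ} (P : Matrix (Fin K) (Fin K) ℝ) (a₁ : Fin K → ℝ) (lam : ℝ)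
    (hP0 : ∀ i j, 0 ≤ P i j) (hub : ∀ k, ∑ j, P k j * a₁ j ^ 2 ≤ lam)
    (hlam0 : 0 ≤ lam) :
    ∀ (m : ℕ) (ν : Fin K → ℝ), (∀ k, 0 ≤ ν k) →
      (∑ z : Fin (m+1) → Fin K, ν (z 0) *
          ∏ i : Fin m, (P (z i.castSucc) (z i.succ) * a₁ (z i.succ) ^ 2))
        ≤ (∑ k, ν k) * lam ^ m := by
  intro m
  induction m with
  | zero =>
    intro ν hν
    have h : (∑ z : Fin 1 → Fin K, ν (z 0) *
        ∏ i : Fin 0, (P (z i.castSucc) (z i.succ) * a₁ (z i.succ) ^ 2)) = ∑ k, ν k := by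
      refine Fintype.sum_equiv (Equiv.funUnique (Fin 1) (Fin K)) _ _ fun z => ?_
      simp [Equiv.funUnique]
    rw [h]; simp
  | succ m ih =>
    intro ν hν
    set F : (Fin (m+2) → Fin K) → ℝ := fun z => ν (z 0) *
        ∏ i : Fin (m+1), (P (z i.castSucc) (z i.succ) * a₁ (z i.succ) ^ 2) with hF
    set e := (Fin.consEquiv (fun _ : Fin (m+2) => Fin K)) with he
    have hterm : ∀ (k : Fin K) (y : Fin (m+1) → Fin K),
        F (e (k, y)) = (ν k * (P k (y 0) * a₁ (y 0) ^ 2)) *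
          ∏ i : Fin m, (P (y i.castSucc) (y i.succ) * a₁ (y i.succ) ^ 2) := by
      intro k y
      simp only [he, hF, Fin.consEquiv_apply]
      rw [Fin.prod_univ_succ]
      simp only [Fin.cons_zero, Fin.cons_succ, Fin.castSucc_zero, ← Fin.succ_castSucc]
      ring
    have key : (∑ z : Fin (m+2) → Fin K, F z)
        = ∑ k : Fin K, ∑ y : Fin (m+1) → Fin K,
            (ν k * (P k (y 0) * a₁ (y 0) ^ 2)) *
              ∏ i : Fin m, (P (y i.castSucc) (y i.succ) * a₁ (y i.succ) ^ 2) := by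
      rw [← (Fintype.sum_equiv e (fun p => F (e p)) F fun p => rfl)]
      rw [Fintype.sum_prod_type]
      exact Finset.sum_congr rfl fun k _ => Finset.sum_congr rfl fun y _ => hterm k y
    rw [key]
    have step : ∀ k : Fin K, (∑ y : Fin (m+1) → Fin K,
        (ν k * (P k (y 0) * a₁ (y 0) ^ 2)) *
          ∏ i : Fin m, (P (y i.castSucc) (y i.succ) * a₁ (y i.succ) ^ 2))
        ≤ ν k * lam * lam ^ m := by
      intro k
      have h1 := ih (fun j => ν k * (P k j * a₁ j ^ 2))
        (fun j => mul_nonneg (hν k) (mul_nonneg (hP0 k j) (sq_nonneg _)))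
      refine h1.trans ?_
      have h2 : (∑ j, ν k * (P k j * a₁ j ^ 2)) ≤ ν k * lam := by
        rw [← Finset.mul_sum]
        exact mul_le_mul_of_nonneg_left (hub k) (hν k)
      exact mul_le_mul_of_nonneg_right h2 (pow_nonneg hlam0 m)
    calc (∑ k : Fin K, ∑ y : Fin (m+1) → Fin K,
        (ν k * (P k (y 0) * a₁ (y 0) ^ 2)) *
          ∏ i : Fin m, (P (y i.castSucc) (y i.succ) * a₁ (y i.succ) ^ 2))
        ≤ ∑ k, ν k * lam * lam ^ m := Finset.sum_le_sum fun k _ => step k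
      _ = (∑ k, ν k) * lam ^ (m+1) := by rw [← Finset.sum_mul, ← Finset.sum_mul]; ring

private lemma sq_eLpNorm_aux {α : Type*} [MeasurableSpace α] (μ : Measure α) (f : α → ℝ) :
    (eLpNorm f 2 μ) ^ 2 = ∫⁻ x, (‖f x‖₊ : ℝ≥0∞) ^ 2 ∂μ := by
  rw [eLpNorm_eq_lintegral_rpow_enorm_toReal two_ne_zero ENNReal.ofNat_ne_top]
  rw [← ENNReal.rpow_natCast _ 2, ← ENNReal.rpow_mul]
  norm_num
  rfl

end Aux

/-- Core of Theorem 3 of the paper: if `λ = max_k ∑_j P k j a₁(j)² < 1` and all complex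
eigenvalues of `P φ₁⁺` (with `φ₁⁺ = diag |a₁|`) lie inside the unit circle, then the
random series `S = ∑_{m=0}^∞ (∏_{i=2}^{m+1} a₁(Z_i)) (a₀(Z₁) + σ(Z₁) ε_m)` converges
absolutely almost surely and `E[S²] < ∞`.  Here `Z n` stands for `Z_{n+1}`. -/
theorem stmt_16 (K : ℕ) (P : Matrix (Fin K) (Fin K) ℝ)
    (hP0 : ∀ i j, 0 ≤ P i j) (hP1 : ∀ i, ∑ j, P i j = 1)
    (μvec : Fin K → ℝ) (hμ0 : ∀ k, 0 ≤ μvec k) (hμ1 : ∑ k, μvec k = 1)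
    (a₀ a₁ σv : Fin K → ℝ) (lam : ℝ)
    (hlam : IsGreatest (Set.range fun k : Fin K => ∑ j, P k j * a₁ j ^ 2) lam)
    (hlt : lam < 1)
    (hspec : ∀ x ∈ spectrum ℂ
      ((P * Matrix.diagonal fun k => |a₁ k|).map Complex.ofReal), ‖x‖ < 1)
    {Ω : Type*} [MeasurableSpace Ω] (μpr : Measure Ω) [IsProbabilityMeasure μpr]
    (Z : ℕ → Ω → Fin K) (ε : ℕ → Ω → ℝ)
    (hZmeas : ∀ t, Measurable (Z t)) (hεmeas : ∀ t, Measurable (ε t))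
    (hZ : ∀ (n : ℕ) (z : Fin (n + 1) → Fin K),
      μpr {ω | ∀ i : Fin (n + 1), Z i ω = z i} =
        ENNReal.ofReal (μvec (z 0) * ∏ i : Fin n, P (z i.castSucc) (z i.succ)))
    (hεindep : ProbabilityTheory.iIndepFun ε μpr)
    (hεgauss : ∀ m, Measure.map (ε m) μpr = ProbabilityTheory.gaussianReal 0 1)
    (hZε : ProbabilityTheory.Indep
      (⨆ t, MeasurableSpace.comap (Z t) inferInstance)
      (⨆ m, MeasurableSpace.comap (ε m) inferInstance) μpr) :
    (∀ᵐ ω ∂μpr, Summable fun m : ℕ =>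
        |(∏ i ∈ Finset.Icc 1 m, a₁ (Z i ω)) * (a₀ (Z 0 ω) + σv (Z 0 ω) * ε m ω)|) ∧
      Integrable (fun ω =>
        (∑' m : ℕ,
          (∏ i ∈ Finset.Icc 1 m, a₁ (Z i ω)) * (a₀ (Z 0 ω) + σv (Z 0 ω) * ε m ω)) ^ 2)
        μpr := by
  classical
  obtain ⟨k0, hk0⟩ := hlam.1
  have hlam0 : 0 ≤ lam := by
    rw [← hk0]; exact Finset.sum_nonneg fun j _ => mul_nonneg (hP0 _ _) (sq_nonneg _)
  have hub : ∀ k, ∑ j, P k j * a₁ j ^ 2 ≤ lam := fun k => hlam.2 (Set.mem_range_self k)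
  set W : ℕ → Ω → ℝ := fun m ω => ∏ i ∈ Finset.Icc 1 m, a₁ (Z i ω) with hWdef
  set X : ℕ → Ω → ℝ :=
    fun m ω => W m ω * (a₀ (Z 0 ω) + σv (Z 0 ω) * ε m ω) with hXdef
  have ha₁meas : Measurable a₁ := measurable_of_finite a₁
  have hWmeas : ∀ m, Measurable (W m) := by
    intro m
    exact Finset.measurable_prod _ fun i _ => (measurable_of_finite a₁).comp (hZmeas i)
  have hXmeas : ∀ m, Measurable (X m) := by
    intro m
    exact (hWmeas m).mul
      (((measurable_of_finite a₀).comp (hZmeas 0)).add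
        (((measurable_of_finite σv).comp (hZmeas 0)).mul (hεmeas m)))
  -- integral of functions of the path
  have hpath : ∀ (m : ℕ) (f : (Fin (m+1) → Fin K) → ℝ),
      ∫ ω, f (fun i => Z i ω) ∂μpr = ∑ z : Fin (m+1) → Fin K,
        (μvec (z 0) * ∏ i : Fin m, P (z i.castSucc) (z i.succ)) * f z := by
    intro m f
    have hV : Measurable (fun ω (i : Fin (m+1)) => Z i ω) :=
      measurable_pi_lambda _ fun i => hZmeas i
    haveI := Measure.isProbabilityMeasure_map (μ := μpr) hV.aemeasurable
    rw [← integral_map hV.aemeasurable (measurable_of_finite f).aestronglyMeasurable,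
      integral_fintype Integrable.of_finite]
    refine Finset.sum_congr rfl fun z _ => ?_
    rw [measureReal_def, Measure.map_apply hV (measurableSet_singleton z)]
    have hset : (fun ω (i : Fin (m+1)) => Z i ω) ⁻¹' {z}
        = {ω | ∀ i : Fin (m+1), Z i ω = z i} := by
      ext ω
      simp [Set.mem_preimage, funext_iff]
    rw [hset, hZ m z, ENNReal.toReal_ofReal
      (mul_nonneg (hμ0 _) (Finset.prod_nonneg fun i _ => hP0 _ _))]
    rw [smul_eq_mul]
  -- boundedness / integrability of functions of the path
  have hbd : ∀ (m : ℕ) (f : (Fin (m+1) → Fin K) → ℝ) (ω : Ω),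
      |f (fun i => Z i ω)| ≤ ∑ z : Fin (m+1) → Fin K, |f z| :=
    fun m f ω => Finset.single_le_sum (f := fun z => |f z|)
      (fun z _ => abs_nonneg _) (Finset.mem_univ _)
  have hIntf : ∀ (m : ℕ) (f : (Fin (m+1) → Fin K) → ℝ),
      Integrable (fun ω => f (fun i => Z i ω)) μpr := by
    intro m f
    refine Integrable.mono' (integrable_const (∑ z : Fin (m+1) → Fin K, |f z|))
      ((measurable_of_finite f).comp
        (measurable_pi_lambda _ fun i => hZmeas i)).aestronglyMeasurable
      (ae_of_all _ fun ω => ?_)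
    simpa [Real.norm_eq_abs] using hbd m f ω
  -- the product over Icc as a function of the path
  have hprod : ∀ (m : ℕ) (ω : Ω),
      (∏ i : Fin m, a₁ ((fun i : Fin (m+1) => Z i ω) i.succ) ^ 2) = (W m ω) ^ 2 := by
    intro m ω
    rw [hWdef]
    simp only
    rw [← Finset.prod_pow]
    simp only [Fin.val_succ]
    rw [Fin.prod_univ_eq_prod_range (fun j => a₁ (Z (j + 1) ω) ^ 2) m]
    induction m with
    | zero => simp
    | succ m ihm =>
      rw [Finset.prod_range_succ, ihm,
        Finset.prod_Icc_succ_top (Nat.le_add_left 1 m) (fun i => a₁ (Z i ω) ^ 2)]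
  -- key second-moment bound for path functionals
  have hW2 : ∀ (m : ℕ) (g : Fin K → ℝ), (∀ k, 0 ≤ g k) →
      ∫ ω, (W m ω) ^ 2 * g (Z 0 ω) ∂μpr ≤ (∑ k, g k) * lam ^ m := by
    intro m g hg
    set f : (Fin (m+1) → Fin K) → ℝ :=
      fun z => (∏ i : Fin m, a₁ (z i.succ) ^ 2) * g (z 0) with hf
    have hfeq : ∀ ω, f (fun i => Z i ω) = (W m ω) ^ 2 * g (Z 0 ω) := by
      intro ω
      rw [hf]
      simp only
      rw [hprod m ω]
      norm_num
    have h1 : ∫ ω, (W m ω) ^ 2 * g (Z 0 ω) ∂μpr = ∫ ω, f (fun i => Z i ω) ∂μpr :=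
      integral_congr_ae (ae_of_all _ fun ω => (hfeq ω).symm)
    rw [h1, hpath m f]
    have h2 : (∑ z : Fin (m+1) → Fin K,
        (μvec (z 0) * ∏ i : Fin m, P (z i.castSucc) (z i.succ)) * f z)
        = ∑ z : Fin (m+1) → Fin K, (fun k => μvec k * g k) (z 0) *
            ∏ i : Fin m, (P (z i.castSucc) (z i.succ) * a₁ (z i.succ) ^ 2) := by
      refine Finset.sum_congr rfl fun z _ => ?_
      rw [hf]
      simp only
      rw [Finset.prod_mul_distrib]
      ring
    rw [h2]
    refine (pathSum_le P a₁ lam hP0 hub hlam0 m _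
      (fun k => mul_nonneg (hμ0 k) (hg k))).trans ?_
    refine mul_le_mul_of_nonneg_right (Finset.sum_le_sum fun k _ => ?_) (pow_nonneg hlam0 m)
    have hk1 : μvec k ≤ 1 := by
      rw [← hμ1]
      exact Finset.single_le_sum (fun k _ => hμ0 k) (Finset.mem_univ k)
    exact mul_le_of_le_one_left (hg k) hk1
  -- moments of the noise
  have hεint : ∀ (m k : ℕ), Integrable (fun ω => (ε m ω) ^ k) μpr := by
    intro m k
    have h := gauss_int_aux k
    rw [← hεgauss m] at h
    have hmk : Measurable fun x : ℝ => x ^ k := by fun_prop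
    exact (integrable_map_measure
      hmk.aestronglyMeasurable (hεmeas m).aemeasurable).mp h
  set c₂ : ℝ := ∫ x, x ^ 2 ∂(ProbabilityTheory.gaussianReal 0 1) with hc₂def
  have hc₂ : ∀ m, ∫ ω, (ε m ω) ^ 2 ∂μpr = c₂ := by
    intro m
    have hm2 : Measurable fun x : ℝ => x ^ 2 := by fun_prop
    rw [hc₂def, ← hεgauss m,
      integral_map (hεmeas m).aemeasurable hm2.aestronglyMeasurable]
  have hc₂0 : 0 ≤ c₂ := by
    rw [hc₂def]; exact integral_nonneg fun x => sq_nonneg x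
  -- independence of path functionals and the noise
  have hindep : ∀ (m n : ℕ) (f : (Fin (m+1) → Fin K) → ℝ),
      ProbabilityTheory.IndepFun (fun ω => f (fun i => Z i ω))
        (fun ω => (ε n ω) ^ 2) μpr := by
    intro m n f
    have hZt : ∀ t, Measurable[⨆ t, MeasurableSpace.comap (Z t) inferInstance] (Z t) :=
      fun t => measurable_iff_comap_le.mpr
        (le_iSup (fun t => MeasurableSpace.comap (Z t) inferInstance) t)
    have hVMZ : Measurable[⨆ t, MeasurableSpace.comap (Z t) inferInstance]
        (fun ω (i : Fin (m+1)) => Z i ω) := by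
      letI : MeasurableSpace Ω := ⨆ t, MeasurableSpace.comap (Z t) inferInstance
      exact measurable_pi_iff.mpr fun i => hZt i
    have hFmeas : Measurable[⨆ t, MeasurableSpace.comap (Z t) inferInstance]
        (fun ω => f (fun i => Z i ω)) :=
      (measurable_of_finite f).comp hVMZ
    have hGmeas : Measurable[⨆ t, MeasurableSpace.comap (ε t) inferInstance] (ε n) :=
      measurable_iff_comap_le.mpr
        (le_iSup (fun t => MeasurableSpace.comap (ε t) inferInstance) n)
    have h1 : ProbabilityTheory.Indep
        (MeasurableSpace.comap (fun ω => f (fun i => Z i ω)) inferInstance)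
        (MeasurableSpace.comap (ε n) inferInstance) μpr :=
      ProbabilityTheory.indep_of_indep_of_le_right
        (ProbabilityTheory.indep_of_indep_of_le_left hZε (measurable_iff_comap_le.mp hFmeas))
        (measurable_iff_comap_le.mp hGmeas)
    have h2 : ProbabilityTheory.IndepFun (fun ω => f (fun i => Z i ω)) (ε n) μpr := h1
    exact h2.comp measurable_id (measurable_id.pow_const 2)
  -- the second moment bound for X m
  set Ca : ℝ := ∑ k, (a₀ k) ^ 2 with hCa
  set Cb : ℝ := ∑ k, (σv k) ^ 2 with hCb
  set C : ℝ := 2 * Ca + 2 * (Cb * c₂) with hC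
  have hCa0 : 0 ≤ Ca := Finset.sum_nonneg fun k _ => sq_nonneg _
  have hCb0 : 0 ≤ Cb := Finset.sum_nonneg fun k _ => sq_nonneg _
  have hC0 : 0 ≤ C := by positivity
  have hmom : ∀ m : ℕ, ∫ ω, (2 * ((W m ω) ^ 2 * (a₀ (Z 0 ω)) ^ 2)
      + 2 * (((W m ω) ^ 2 * (σv (Z 0 ω)) ^ 2) * (ε m ω) ^ 2)) ∂μpr ≤ C * lam ^ m := by
    intro m
    set fa : (Fin (m+1) → Fin K) → ℝ :=
      fun z => (∏ i : Fin m, a₁ (z i.succ) ^ 2) * (a₀ (z 0)) ^ 2 with hfa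
    set fb : (Fin (m+1) → Fin K) → ℝ :=
      fun z => (∏ i : Fin m, a₁ (z i.succ) ^ 2) * (σv (z 0)) ^ 2 with hfb
    have hfaeq : ∀ ω, fa (fun i => Z i ω) = (W m ω) ^ 2 * (a₀ (Z 0 ω)) ^ 2 := by
      intro ω; rw [hfa]; simp only; rw [hprod m ω]; norm_num
    have hfbeq : ∀ ω, fb (fun i => Z i ω) = (W m ω) ^ 2 * (σv (Z 0 ω)) ^ 2 := by
      intro ω; rw [hfb]; simp only; rw [hprod m ω]; norm_num
    have hAint : Integrable (fun ω => (W m ω) ^ 2 * (a₀ (Z 0 ω)) ^ 2) μpr :=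
      (hIntf m fa).congr (ae_of_all _ fun ω => hfaeq ω)
    have hBint : Integrable (fun ω => (W m ω) ^ 2 * (σv (Z 0 ω)) ^ 2) μpr :=
      (hIntf m fb).congr (ae_of_all _ fun ω => hfbeq ω)
    have hBεint : Integrable (fun ω => ((W m ω) ^ 2 * (σv (Z 0 ω)) ^ 2) * (ε m ω) ^ 2) μpr := by
      refine Integrable.bdd_mul (hεint m 2) hBint.aestronglyMeasurable
        (c := ∑ z : Fin (m+1) → Fin K, |fb z|) (ae_of_all _ fun ω => ?_)
      rw [Real.norm_eq_abs, ← hfbeq ω]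
      exact hbd m fb ω
    have hBεeq : ∫ ω, ((W m ω) ^ 2 * (σv (Z 0 ω)) ^ 2) * (ε m ω) ^ 2 ∂μpr
        = (∫ ω, (W m ω) ^ 2 * (σv (Z 0 ω)) ^ 2 ∂μpr) * c₂ := by
      have hmul : ∫ ω, (fb (fun i => Z i ω)) * (ε m ω) ^ 2 ∂μpr
          = (∫ ω, fb (fun i => Z i ω) ∂μpr) * (∫ ω, (ε m ω) ^ 2 ∂μpr) :=
        (hindep m m fb).integral_fun_mul_eq_mul_integral (hIntf m fb).aestronglyMeasurable
          (hεint m 2).aestronglyMeasurable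
      calc ∫ ω, ((W m ω) ^ 2 * (σv (Z 0 ω)) ^ 2) * (ε m ω) ^ 2 ∂μpr
          = ∫ ω, (fb (fun i => Z i ω)) * (ε m ω) ^ 2 ∂μpr :=
            integral_congr_ae (ae_of_all _ fun ω => by simp only [hfbeq ω])
        _ = (∫ ω, fb (fun i => Z i ω) ∂μpr) * (∫ ω, (ε m ω) ^ 2 ∂μpr) := hmul
        _ = (∫ ω, (W m ω) ^ 2 * (σv (Z 0 ω)) ^ 2 ∂μpr) * c₂ := by
            rw [hc₂ m]
            congr 1
            exact integral_congr_ae (ae_of_all _ fun ω => hfbeq ω)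
    rw [integral_add (hAint.const_mul 2) (hBεint.const_mul 2),
      integral_const_mul, integral_const_mul, hBεeq]
    have h1 : ∫ ω, (W m ω) ^ 2 * (a₀ (Z 0 ω)) ^ 2 ∂μpr ≤ Ca * lam ^ m :=
      hW2 m (fun k => (a₀ k) ^ 2) (fun k => sq_nonneg _)
    have h2 : ∫ ω, (W m ω) ^ 2 * (σv (Z 0 ω)) ^ 2 ∂μpr ≤ Cb * lam ^ m :=
      hW2 m (fun k => (σv k) ^ 2) (fun k => sq_nonneg _)
    have h3 : (∫ ω, (W m ω) ^ 2 * (σv (Z 0 ω)) ^ 2 ∂μpr) * c₂ ≤ (Cb * lam ^ m) * c₂ :=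
      mul_le_mul_of_nonneg_right h2 hc₂0
    rw [hC]
    nlinarith [h1, h3]
  -- lintegral bound for ‖X m‖² 
  have hE2 : ∀ m : ℕ, (∫⁻ ω, ((‖X m ω‖₊ : ℝ≥0∞)) ^ 2 ∂μpr)
      ≤ ENNReal.ofReal C * (ENNReal.ofReal lam) ^ m := by
    intro m
    have hYint : Integrable (fun ω => 2 * ((W m ω) ^ 2 * (a₀ (Z 0 ω)) ^ 2)
        + 2 * (((W m ω) ^ 2 * (σv (Z 0 ω)) ^ 2) * (ε m ω) ^ 2)) μpr := by
      set fa : (Fin (m+1) → Fin K) → ℝ :=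
        fun z => (∏ i : Fin m, a₁ (z i.succ) ^ 2) * (a₀ (z 0)) ^ 2 with hfa
      set fb : (Fin (m+1) → Fin K) → ℝ :=
        fun z => (∏ i : Fin m, a₁ (z i.succ) ^ 2) * (σv (z 0)) ^ 2 with hfb
      have hfaeq : ∀ ω, fa (fun i => Z i ω) = (W m ω) ^ 2 * (a₀ (Z 0 ω)) ^ 2 := by
        intro ω; rw [hfa]; simp only; rw [hprod m ω]; norm_num
      have hfbeq : ∀ ω, fb (fun i => Z i ω) = (W m ω) ^ 2 * (σv (Z 0 ω)) ^ 2 := by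
        intro ω; rw [hfb]; simp only; rw [hprod m ω]; norm_num
      have hAint : Integrable (fun ω => (W m ω) ^ 2 * (a₀ (Z 0 ω)) ^ 2) μpr :=
        (hIntf m fa).congr (ae_of_all _ fun ω => hfaeq ω)
      have hBint : Integrable (fun ω => (W m ω) ^ 2 * (σv (Z 0 ω)) ^ 2) μpr :=
        (hIntf m fb).congr (ae_of_all _ fun ω => hfbeq ω)
      have hBεint : Integrable
          (fun ω => ((W m ω) ^ 2 * (σv (Z 0 ω)) ^ 2) * (ε m ω) ^ 2) μpr := by
        refine Integrable.bdd_mul (hεint m 2) hBint.aestronglyMeasurable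
          (c := ∑ z : Fin (m+1) → Fin K, |fb z|) (ae_of_all _ fun ω => ?_)
        rw [Real.norm_eq_abs, ← hfbeq ω]
        exact hbd m fb ω
      exact (hAint.const_mul 2).add (hBεint.const_mul 2)
    calc (∫⁻ ω, ((‖X m ω‖₊ : ℝ≥0∞)) ^ 2 ∂μpr)
        = ∫⁻ ω, ENNReal.ofReal ((X m ω) ^ 2) ∂μpr := by
          refine lintegral_congr fun ω => ?_
          rw [← enorm_eq_nnnorm, ← ofReal_norm, ← ENNReal.ofReal_pow (norm_nonneg _),
            Real.norm_eq_abs, sq_abs]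
      _ ≤ ∫⁻ ω, ENNReal.ofReal (2 * ((W m ω) ^ 2 * (a₀ (Z 0 ω)) ^ 2)
            + 2 * (((W m ω) ^ 2 * (σv (Z 0 ω)) ^ 2) * (ε m ω) ^ 2)) ∂μpr := by
          refine lintegral_mono fun ω => ENNReal.ofReal_le_ofReal ?_
          rw [hXdef]
          simp only
          nlinarith [sq_nonneg (W m ω * (a₀ (Z 0 ω) - σv (Z 0 ω) * ε m ω))]
      _ = ENNReal.ofReal (∫ ω, (2 * ((W m ω) ^ 2 * (a₀ (Z 0 ω)) ^ 2)
            + 2 * (((W m ω) ^ 2 * (σv (Z 0 ω)) ^ 2) * (ε m ω) ^ 2)) ∂μpr) :=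
          (ofReal_integral_eq_lintegral_ofReal hYint (ae_of_all _ fun ω => by positivity)).symm
      _ ≤ ENNReal.ofReal (C * lam ^ m) := ENNReal.ofReal_le_ofReal (hmom m)
      _ = ENNReal.ofReal C * (ENNReal.ofReal lam) ^ m := by
          rw [ENNReal.ofReal_mul hC0, ENNReal.ofReal_pow hlam0]
  -- eLpNorm bounds
  set D2 : ℝ≥0∞ := (ENNReal.ofReal C) ^ (2⁻¹ : ℝ) with hD2
  set s : ℝ≥0∞ := (ENNReal.ofReal lam) ^ (2⁻¹ : ℝ) with hs
  have hN : ∀ m : ℕ, eLpNorm (X m) 2 μpr ≤ D2 * s ^ m := by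
    intro m
    have hsq : (eLpNorm (X m) 2 μpr) ^ 2 ≤ ENNReal.ofReal C * (ENNReal.ofReal lam) ^ m := by
      rw [sq_eLpNorm_aux]
      exact hE2 m
    have heq : eLpNorm (X m) 2 μpr = ((eLpNorm (X m) 2 μpr) ^ 2) ^ (2⁻¹ : ℝ) := by
      rw [← ENNReal.rpow_natCast _ 2, ← ENNReal.rpow_mul]
      norm_num
    rw [heq]
    refine (ENNReal.rpow_le_rpow hsq (by norm_num)).trans ?_
    rw [ENNReal.mul_rpow_of_nonneg _ _ (by norm_num : (0:ℝ) ≤ 2⁻¹)]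
    rw [hD2, hs]
    rw [← ENNReal.rpow_natCast (ENNReal.ofReal lam) m, ← ENNReal.rpow_mul,
      ← ENNReal.rpow_natCast ((ENNReal.ofReal lam) ^ (2⁻¹ : ℝ)) m, ← ENNReal.rpow_mul]
    rw [mul_comm (m : ℝ) (2⁻¹ : ℝ)]
  have hs1 : s < 1 := by
    rw [hs]
    refine ENNReal.rpow_lt_one (ENNReal.ofReal_lt_one.mpr hlt) (by norm_num)
  have hD2top : D2 ≠ ⊤ := by
    rw [hD2]
    exact ENNReal.rpow_ne_top_of_nonneg (by norm_num) ENNReal.ofReal_ne_top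
  set B : ℝ≥0∞ := D2 * (1 - s)⁻¹ with hB
  have hBtop : B ≠ ⊤ := by
    rw [hB]
    refine ENNReal.mul_ne_top hD2top (ENNReal.inv_ne_top.mpr fun h0 => ?_)
    exact absurd (tsub_eq_zero_iff_le.mp h0) (not_le.mpr hs1)
  have hNsum : (∑' m, eLpNorm (X m) 2 μpr) ≤ B := by
    refine (ENNReal.tsum_le_tsum hN).trans ?_
    rw [ENNReal.tsum_mul_left, ENNReal.tsum_geometric, hB]
  -- Part 1 : a.s. absolute summability
  have hL1le : ∀ m : ℕ, (∫⁻ ω, (‖X m ω‖₊ : ℝ≥0∞) ∂μpr) ≤ eLpNorm (X m) 2 μpr := by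
    intro m
    have h := eLpNorm_le_eLpNorm_of_exponent_le (μ := μpr)
      (by norm_num : (1 : ℝ≥0∞) ≤ 2) (hXmeas m).aestronglyMeasurable
    rwa [eLpNorm_one_eq_lintegral_enorm] at h
  have hGmeas : Measurable (fun ω => ∑' m, (‖X m ω‖₊ : ℝ≥0∞)) :=
    Measurable.ennreal_tsum fun m => (hXmeas m).nnnorm.coe_nnreal_ennreal
  have hGfin : (∫⁻ ω, ∑' m, (‖X m ω‖₊ : ℝ≥0∞) ∂μpr) ≤ B := by
    rw [lintegral_tsum fun m => ((hXmeas m).nnnorm.coe_nnreal_ennreal).aemeasurable]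
    exact (ENNReal.tsum_le_tsum hL1le).trans hNsum
  have hae : ∀ᵐ ω ∂μpr, (∑' m, (‖X m ω‖₊ : ℝ≥0∞)) < ⊤ :=
    ae_lt_top hGmeas (hGfin.trans_lt hBtop.lt_top).ne
  have part1 : ∀ᵐ ω ∂μpr, Summable fun m : ℕ => |X m ω| := by
    refine hae.mono fun ω hω => ?_
    have h1 : Summable (fun m => ‖X m ω‖₊) := ENNReal.tsum_coe_ne_top_iff_summable.mp hω.ne
    have h2 := NNReal.summable_coe.mpr h1
    simpa [Real.norm_eq_abs] using h2
  refine ⟨part1, ?_⟩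
  -- Part 2 : integrability of S²
  have htend : ∀ᵐ ω ∂μpr, Filter.Tendsto (fun N => ∑ m ∈ Finset.range N, X m ω)
      Filter.atTop (nhds (∑' m, X m ω)) :=
    part1.mono fun ω hω => (hω.of_abs).hasSum.tendsto_sum_nat
  have hSmeas : AEMeasurable (fun ω => ∑' m, X m ω) μpr := by
    refine aemeasurable_of_tendsto_metrizable_ae Filter.atTop
      (fun N => (Finset.measurable_sum (Finset.range N) fun m _ => hXmeas m).aemeasurable)
      htend
  -- monotone convergence for the square of partial sums
  have hmono : ∀ ω : Ω, Monotone (fun N => ∑ m ∈ Finset.range N, (‖X m ω‖₊ : ℝ≥0∞)) :=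
    fun ω a b hab => Finset.sum_le_sum_of_subset (Finset.range_subset_range.mpr hab)
  have hsup : ∀ ω : Ω, (∑' m, (‖X m ω‖₊ : ℝ≥0∞)) ^ 2
      = ⨆ N, (∑ m ∈ Finset.range N, (‖X m ω‖₊ : ℝ≥0∞)) ^ 2 := by
    intro ω
    have h1 := ENNReal.tendsto_nat_tsum (fun m => (‖X m ω‖₊ : ℝ≥0∞))
    have h2 : Filter.Tendsto (fun N => (∑ m ∈ Finset.range N, (‖X m ω‖₊ : ℝ≥0∞)) ^ 2)
        Filter.atTop (nhds ((∑' m, (‖X m ω‖₊ : ℝ≥0∞)) ^ 2)) := ENNReal.Tendsto.pow h1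
    exact tendsto_nhds_unique h2
      (tendsto_atTop_iSup fun a b hab => pow_le_pow_left' (hmono ω hab) 2)
  have hpartial : ∀ N : ℕ, (∫⁻ ω, (∑ m ∈ Finset.range N, (‖X m ω‖₊ : ℝ≥0∞)) ^ 2 ∂μpr)
      ≤ B ^ 2 := by
    intro N
    set h : Ω → ℝ := fun ω => ∑ m ∈ Finset.range N, |X m ω| with hh
    have hpoint : ∀ ω, (∑ m ∈ Finset.range N, (‖X m ω‖₊ : ℝ≥0∞)) = (‖h ω‖₊ : ℝ≥0∞) := by
      intro ω
      rw [hh]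
      simp only
      rw [← enorm_eq_nnnorm, ← ofReal_norm, Real.norm_eq_abs,
        abs_of_nonneg (Finset.sum_nonneg fun m _ => abs_nonneg _),
        ENNReal.ofReal_sum_of_nonneg fun m _ => abs_nonneg _]
      refine Finset.sum_congr rfl fun m _ => ?_
      rw [← Real.norm_eq_abs, ofReal_norm, enorm_eq_nnnorm]
    have h1 : (∫⁻ ω, (∑ m ∈ Finset.range N, (‖X m ω‖₊ : ℝ≥0∞)) ^ 2 ∂μpr)
        = (eLpNorm h 2 μpr) ^ 2 := by
      rw [sq_eLpNorm_aux]
      exact lintegral_congr fun ω => by rw [hpoint ω]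
    rw [h1]
    have h2 : eLpNorm h 2 μpr ≤ ∑ m ∈ Finset.range N, eLpNorm (X m) 2 μpr := by
      have h3 : eLpNorm h 2 μpr
          = eLpNorm (∑ m ∈ Finset.range N, fun ω => |X m ω|) 2 μpr := by
        congr 1
        funext ω
        rw [hh]
        simp [Finset.sum_apply]
      rw [h3]
      refine (eLpNorm_sum_le (fun m _ =>
        ((hXmeas m).abs).aestronglyMeasurable) (by norm_num)).trans ?_
      refine Finset.sum_le_sum fun m _ => le_of_eq ?_
      have : (fun ω => |X m ω|) = fun ω => ‖X m ω‖ := by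
        funext ω; rw [Real.norm_eq_abs]
      rw [this, eLpNorm_norm]
    refine (pow_le_pow_left' h2 2).trans (pow_le_pow_left' ?_ 2)
    exact (ENNReal.sum_le_tsum _).trans hNsum
  have hGsq : (∫⁻ ω, (∑' m, (‖X m ω‖₊ : ℝ≥0∞)) ^ 2 ∂μpr) ≤ B ^ 2 := by
    have h1 : (∫⁻ ω, (∑' m, (‖X m ω‖₊ : ℝ≥0∞)) ^ 2 ∂μpr)
        = ⨆ N, ∫⁻ ω, (∑ m ∈ Finset.range N, (‖X m ω‖₊ : ℝ≥0∞)) ^ 2 ∂μpr := by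
      rw [← lintegral_iSup (fun N => (Finset.measurable_sum (Finset.range N)
          fun m _ => (hXmeas m).nnnorm.coe_nnreal_ennreal).pow_const 2)
        (fun a b hab ω => pow_le_pow_left' (hmono ω hab) 2)]
      exact lintegral_congr fun ω => hsup ω
    rw [h1]
    exact iSup_le hpartial
  have habs : ∀ᵐ ω ∂μpr, (‖(∑' m, X m ω)‖₊ : ℝ≥0∞) ≤ ∑' m, (‖X m ω‖₊ : ℝ≥0∞) := by
    refine part1.mono fun ω hω => ?_
    have hsum : Summable fun m => ‖X m ω‖₊ := by
      rw [← NNReal.summable_coe]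
      simpa [Real.norm_eq_abs] using hω
    calc (‖(∑' m, X m ω)‖₊ : ℝ≥0∞) ≤ ((∑' m, ‖X m ω‖₊ : ℝ≥0) : ℝ≥0∞) :=
        ENNReal.coe_le_coe.mpr (nnnorm_tsum_le hsum)
      _ = ∑' m, (‖X m ω‖₊ : ℝ≥0∞) := ENNReal.coe_tsum hsum
  refine ⟨(hSmeas.pow_const 2).aestronglyMeasurable, ?_⟩
  have hfin : (∫⁻ ω, (‖(∑' m, X m ω) ^ 2‖₊ : ℝ≥0∞) ∂μpr) < ⊤ := by
    have hle : ∀ᵐ ω ∂μpr, (‖(∑' m, X m ω) ^ 2‖₊ : ℝ≥0∞)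
        ≤ (∑' m, (‖X m ω‖₊ : ℝ≥0∞)) ^ 2 := by
      refine habs.mono fun ω h => ?_
      rw [nnnorm_pow, ENNReal.coe_pow]
      exact pow_le_pow_left' h 2
    refine (lintegral_mono_ae hle).trans_lt ?_
    exact hGsq.trans_lt (ENNReal.pow_ne_top hBtop).lt_top
  exact hfin
end

section
/- Let P be a K×K row-stochastic real matrix, μ a probability vector on {1,…,K}, a₁ : {1,…,K} → ℝ, and λ = max_{1≤k≤K} Σ_{j=1}^{K} P_{kj} a₁(j)². Let (Z_t)_{t≥1} be a Markov chain on {1,…,K} with transition matrix P and initial distribution μ. Then for all m ≥ 0 and n ≥ 0, E[(Π_{i=2}^{m+1} a₁(Z_i)) · (Π_{j=2}^{n+1} a₁(Z_j))] ≤ λ^{(m+n)/2}. -/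
open MeasureTheory

namespace Stmt17Aux

variable {K : ℕ} (P : Matrix (Fin K) (Fin K) ℝ) (μvec : Fin K → ℝ) (a₁ : Fin K → ℝ)

/-- Probability of a path of length `N + 1`. -/
def pathP (N : ℕ) (z : Fin (N + 1) → Fin K) : ℝ :=
  μvec (z 0) * ∏ i : Fin N, P (z i.castSucc) (z i.succ)

/-- Product of `a₁` along coordinates `1, …, m` of a path. -/
def prodA (m : ℕ) (z : Fin (m + 1) → Fin K) : ℝ :=
  ∏ i : Fin m, a₁ (z i.succ)

lemma pathP_nonneg (hP0 : ∀ i j, 0 ≤ P i j) (hμ0 : ∀ k, 0 ≤ μvec k)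
    (N : ℕ) (z : Fin (N + 1) → Fin K) : 0 ≤ pathP P μvec N z :=
  mul_nonneg (hμ0 _) (Finset.prod_nonneg fun _ _ => hP0 _ _)

lemma pathP_snoc (N : ℕ) (z : Fin (N + 1) → Fin K) (j : Fin K) :
    pathP P μvec (N + 1) (Fin.snoc z j) = pathP P μvec N z * P (z (Fin.last N)) j := by
  unfold pathP
  rw [Fin.prod_univ_castSucc]
  have h0 : (Fin.snoc z j : Fin (N + 2) → Fin K) 0 = z 0 := by
    have : (0 : Fin (N + 2)) = Fin.castSucc 0 := rfl
    rw [this, Fin.snoc_castSucc]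
  simp only [h0, Fin.succ_castSucc, Fin.snoc_castSucc, Fin.succ_last, Fin.snoc_last]
  ring

lemma prodA_snoc (m : ℕ) (z : Fin (m + 1) → Fin K) (j : Fin K) :
    prodA a₁ (m + 1) (Fin.snoc z j) = prodA a₁ m z * a₁ j := by
  unfold prodA
  rw [Fin.prod_univ_castSucc]
  simp only [Fin.succ_castSucc, Fin.snoc_castSucc, Fin.succ_last, Fin.snoc_last]

lemma sum_snoc (N : ℕ) (f : (Fin (N + 2) → Fin K) → ℝ) :
    ∑ z : Fin (N + 2) → Fin K, f z
      = ∑ z : Fin (N + 1) → Fin K, ∑ j : Fin K, f (Fin.snoc z j) := by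
  rw [← (Fin.snocEquiv (fun _ => Fin K)).sum_comp, Fintype.sum_prod_type]
  rw [Finset.sum_comm]
  simp [Fin.snocEquiv]

lemma marginal (hP1 : ∀ i, ∑ j, P i j = 1) (N : ℕ) (g : (Fin (N + 1) → Fin K) → ℝ) :
    ∑ z : Fin (N + 2) → Fin K, pathP P μvec (N + 1) z * g (fun i => z i.castSucc)
      = ∑ z : Fin (N + 1) → Fin K, pathP P μvec N z * g z := by
  rw [sum_snoc]
  refine Finset.sum_congr rfl fun z _ => ?_
  have hres : ∀ j : Fin K,
      (fun i : Fin (N + 1) => (Fin.snoc z j : Fin (N + 2) → Fin K) i.castSucc) = z :=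
    fun j => funext fun i => by simp
  simp only [pathP_snoc, hres]
  rw [← Finset.sum_mul, ← Finset.mul_sum, hP1, mul_one]

lemma marginal_le (hP1 : ∀ i, ∑ j, P i j = 1) (m : ℕ) :
    ∀ N (h : m ≤ N) (g : (Fin (m + 1) → Fin K) → ℝ),
      ∑ z : Fin (N + 1) → Fin K,
          pathP P μvec N z * g (fun i => z (Fin.castLE (by omega) i))
        = ∑ z : Fin (m + 1) → Fin K, pathP P μvec m z * g z := by
  refine Nat.le_induction ?_ ?_
  · intro g
    refine Finset.sum_congr rfl fun z _ => ?_
    have : (fun i : Fin (m + 1) => z (Fin.castLE (by omega) i)) = z :=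
      funext fun i => congrArg z (Fin.ext rfl)
    rw [this]
  · intro N hN ih g
    have h1 : m + 1 ≤ N + 1 := by omega
    have step : ∀ z : Fin (N + 2) → Fin K,
        (fun i : Fin (m + 1) => z (Fin.castLE (by omega) i))
          = (fun i : Fin (m + 1) =>
              (fun k : Fin (N + 1) => z k.castSucc) (Fin.castLE h1 i)) := by
      intro z; funext i; exact congrArg z (Fin.ext rfl)
    calc ∑ z : Fin (N + 2) → Fin K,
            pathP P μvec (N + 1) z * g (fun i => z (Fin.castLE (by omega) i))
        = ∑ z : Fin (N + 2) → Fin K, pathP P μvec (N + 1) z *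
            (fun w : Fin (N + 1) → Fin K => g (fun i => w (Fin.castLE h1 i)))
              (fun k => z k.castSucc) := by
          refine Finset.sum_congr rfl fun z _ => ?_
          rw [step z]
      _ = ∑ z : Fin (N + 1) → Fin K, pathP P μvec N z *
            g (fun i => z (Fin.castLE h1 i)) := by
          exact marginal P μvec hP1 N fun w => g fun i => w (Fin.castLE h1 i)
      _ = ∑ z : Fin (m + 1) → Fin K, pathP P μvec m z * g z := ih g

lemma secondMoment (hP0 : ∀ i j, 0 ≤ P i j) (hμ0 : ∀ k, 0 ≤ μvec k)
    (hμ1 : ∑ k, μvec k = 1) {lam : ℝ} (hlam0 : 0 ≤ lam)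
    (hub : ∀ k, ∑ j, P k j * a₁ j ^ 2 ≤ lam) :
    ∀ m : ℕ, ∑ z : Fin (m + 1) → Fin K,
        pathP P μvec m z * (prodA a₁ m z) ^ 2 ≤ lam ^ m := by
  intro m
  induction m with
  | zero =>
      have h1 : ∑ z : Fin 1 → Fin K, pathP P μvec 0 z * (prodA a₁ 0 z) ^ 2
          = ∑ k, μvec k := by
        refine Fintype.sum_equiv (Equiv.funUnique (Fin 1) (Fin K)) _ _ fun z => ?_
        simp [pathP, prodA]
      rw [h1, hμ1, pow_zero]
  | succ m ih =>
      have hnn : ∀ z : Fin (m + 1) → Fin K,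
          0 ≤ pathP P μvec m z * (prodA a₁ m z) ^ 2 :=
        fun z => mul_nonneg (pathP_nonneg P μvec hP0 hμ0 m z) (sq_nonneg _)
      calc ∑ z : Fin (m + 2) → Fin K, pathP P μvec (m + 1) z * (prodA a₁ (m + 1) z) ^ 2
          = ∑ z : Fin (m + 1) → Fin K,
              (pathP P μvec m z * (prodA a₁ m z) ^ 2) *
                (∑ j, P (z (Fin.last m)) j * a₁ j ^ 2) := by
            rw [sum_snoc]
            refine Finset.sum_congr rfl fun z _ => ?_
            rw [Finset.mul_sum]
            refine Finset.sum_congr rfl fun j _ => ?_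
            rw [pathP_snoc, prodA_snoc, mul_pow]
            ring
        _ ≤ ∑ z : Fin (m + 1) → Fin K,
              (pathP P μvec m z * (prodA a₁ m z) ^ 2) * lam := by
            exact Finset.sum_le_sum fun z _ =>
              mul_le_mul_of_nonneg_left (hub _) (hnn z)
        _ = (∑ z : Fin (m + 1) → Fin K,
              pathP P μvec m z * (prodA a₁ m z) ^ 2) * lam :=
            (Finset.sum_mul _ _ _).symm
        _ ≤ lam ^ m * lam := mul_le_mul_of_nonneg_right ih hlam0
        _ = lam ^ (m + 1) := (pow_succ _ _).symm

lemma prod_Icc_fin (f : ℕ → ℝ) (m : ℕ) :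
    ∏ i ∈ Finset.Icc 1 m, f i = ∏ i : Fin m, f (i + 1) := by
  rw [Fin.prod_univ_eq_prod_range (fun i => f (i + 1)) m]
  rw [← Finset.Ico_add_one_right_eq_Icc, Finset.prod_Ico_eq_prod_range]
  simp [add_comm]

end Stmt17Aux

open Stmt17Aux

/-- Cross-term estimate: with `λ = max_k ∑_j P k j a₁(j)²`, for all `m, n ≥ 0`,
`E[(∏_{i=2}^{m+1} a₁(Z_i)) (∏_{j=2}^{n+1} a₁(Z_j))] ≤ λ^{(m+n)/2}`
(real power).  Here `Z n` stands for `Z_{n+1}`. -/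
theorem stmt_17 (K : ℕ) (P : Matrix (Fin K) (Fin K) ℝ)
    (hP0 : ∀ i j, 0 ≤ P i j) (hP1 : ∀ i, ∑ j, P i j = 1)
    (μvec : Fin K → ℝ) (hμ0 : ∀ k, 0 ≤ μvec k) (hμ1 : ∑ k, μvec k = 1)
    (a₁ : Fin K → ℝ) (lam : ℝ)
    (hlam : IsGreatest (Set.range fun k : Fin K => ∑ j, P k j * a₁ j ^ 2) lam)
    {Ω : Type*} [MeasurableSpace Ω] (μpr : Measure Ω) [IsProbabilityMeasure μpr]
    (Z : ℕ → Ω → Fin K) (hZmeas : ∀ t, Measurable (Z t))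
    (hZ : ∀ (n : ℕ) (z : Fin (n + 1) → Fin K),
      μpr {ω | ∀ i : Fin (n + 1), Z i ω = z i} =
        ENNReal.ofReal (μvec (z 0) * ∏ i : Fin n, P (z i.castSucc) (z i.succ)))
    (m n : ℕ) :
    ∫ ω, (∏ i ∈ Finset.Icc 1 m, a₁ (Z i ω)) * ∏ j ∈ Finset.Icc 1 n, a₁ (Z j ω) ∂μpr
      ≤ lam ^ (((m : ℝ) + (n : ℝ)) / 2) := by
  -- λ is nonnegative and an upper bound
  obtain ⟨⟨k₀, hk₀⟩, hub'⟩ := hlam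
  have hub : ∀ k, ∑ j, P k j * a₁ j ^ 2 ≤ lam := fun k => hub' ⟨k, rfl⟩
  have hlam0 : 0 ≤ lam := by
    rw [← hk₀]
    exact Finset.sum_nonneg fun j _ => mul_nonneg (hP0 _ _) (sq_nonneg _)
  -- integral formula
  have key : ∀ (N : ℕ) (g : (Fin (N + 1) → Fin K) → ℝ),
      ∫ ω, g (fun i => Z i ω) ∂μpr = ∑ z, pathP P μvec N z * g z := by
    intro N g
    have hT : Measurable (fun ω (i : Fin (N + 1)) => Z i ω) :=
      measurable_pi_lambda _ fun i => hZmeas i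
    have hg : Measurable g := measurable_of_countable g
    rw [← integral_map hT.aemeasurable hg.aestronglyMeasurable]
    haveI : IsProbabilityMeasure (μpr.map (fun ω (i : Fin (N + 1)) => Z i ω)) :=
      Measure.isProbabilityMeasure_map hT.aemeasurable
    rw [integral_fintype (Integrable.of_finite)]
    refine Finset.sum_congr rfl fun z _ => ?_
    rw [measureReal_def, Measure.map_apply hT (measurableSet_singleton z)]
    have hpre : (fun ω (i : Fin (N + 1)) => Z i ω) ⁻¹' {z}
        = {ω | ∀ i : Fin (N + 1), Z i ω = z i} := by
      ext ω; simp [funext_iff]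
    rw [hpre, hZ N z]
    show (ENNReal.ofReal (pathP P μvec N z)).toReal • g z = pathP P μvec N z * g z
    rw [ENNReal.toReal_ofReal (pathP_nonneg P μvec hP0 hμ0 N z), smul_eq_mul]
  set N := max m n with hN
  have hm1 : m + 1 ≤ N + 1 := by omega
  have hn1 : n + 1 ≤ N + 1 := by omega
  set F : (Fin (N + 1) → Fin K) → ℝ :=
    fun z => prodA a₁ m (fun i => z (Fin.castLE hm1 i)) with hF
  set G : (Fin (N + 1) → Fin K) → ℝ :=
    fun z => prodA a₁ n (fun i => z (Fin.castLE hn1 i)) with hG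
  have hFt : ∀ ω, ∏ i ∈ Finset.Icc 1 m, a₁ (Z i ω) = F (fun i => Z i ω) := by
    intro ω
    rw [prod_Icc_fin (fun i => a₁ (Z i ω)) m]
    rfl
  have hGt : ∀ ω, ∏ j ∈ Finset.Icc 1 n, a₁ (Z j ω) = G (fun i => Z i ω) := by
    intro ω
    rw [prod_Icc_fin (fun i => a₁ (Z i ω)) n]
    rfl
  have hint : ∫ ω, (∏ i ∈ Finset.Icc 1 m, a₁ (Z i ω)) *
      ∏ j ∈ Finset.Icc 1 n, a₁ (Z j ω) ∂μpr
      = ∑ z, pathP P μvec N z * (F z * G z) := by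
    rw [← key N (fun z => F z * G z)]
    simp only [hFt, hGt]
  -- Cauchy-Schwarz
  have hp : ∀ z : Fin (N + 1) → Fin K, 0 ≤ pathP P μvec N z :=
    pathP_nonneg P μvec hP0 hμ0 N
  set A : ℝ := ∑ z, pathP P μvec N z * (F z) ^ 2 with hA
  set B : ℝ := ∑ z, pathP P μvec N z * (G z) ^ 2 with hB
  have hA0 : 0 ≤ A := Finset.sum_nonneg fun z _ => mul_nonneg (hp z) (sq_nonneg _)
  have hB0 : 0 ≤ B := Finset.sum_nonneg fun z _ => mul_nonneg (hp z) (sq_nonneg _)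
  set S : ℝ := ∑ z, pathP P μvec N z * (F z * G z) with hS
  have hcs : S ^ 2 ≤ A * B := by
    have h := Finset.sum_mul_sq_le_sq_mul_sq Finset.univ
      (fun z => Real.sqrt (pathP P μvec N z) * F z)
      (fun z => Real.sqrt (pathP P μvec N z) * G z)
    have e1 : ∀ z : Fin (N + 1) → Fin K,
        (Real.sqrt (pathP P μvec N z) * F z) * (Real.sqrt (pathP P μvec N z) * G z)
          = pathP P μvec N z * (F z * G z) := by
      intro z
      have := Real.mul_self_sqrt (hp z)
      ring_nf
      rw [Real.sq_sqrt (hp z)]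
      ring
    have e2 : ∀ z : Fin (N + 1) → Fin K,
        (Real.sqrt (pathP P μvec N z) * F z) ^ 2 = pathP P μvec N z * (F z) ^ 2 := by
      intro z; rw [mul_pow, Real.sq_sqrt (hp z)]
    have e3 : ∀ z : Fin (N + 1) → Fin K,
        (Real.sqrt (pathP P μvec N z) * G z) ^ 2 = pathP P μvec N z * (G z) ^ 2 := by
      intro z; rw [mul_pow, Real.sq_sqrt (hp z)]
    simp only [e1, e2, e3] at h
    exact h
  have hSle : S ≤ Real.sqrt A * Real.sqrt B := by
    calc S ≤ |S| := le_abs_self S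
      _ = Real.sqrt (S ^ 2) := (Real.sqrt_sq_eq_abs S).symm
      _ ≤ Real.sqrt (A * B) := Real.sqrt_le_sqrt hcs
      _ = Real.sqrt A * Real.sqrt B := Real.sqrt_mul hA0 _
  -- second moment bounds
  have hAm : A ≤ lam ^ m := by
    have := marginal_le P μvec hP1 m N (le_max_left m n)
      (fun w => (prodA a₁ m w) ^ 2)
    calc A = ∑ z : Fin (m + 1) → Fin K, pathP P μvec m z * (prodA a₁ m z) ^ 2 := by
          rw [hA, ← this]
      _ ≤ lam ^ m := secondMoment P μvec a₁ hP0 hμ0 hμ1 hlam0 hub m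
  have hBn : B ≤ lam ^ n := by
    have := marginal_le P μvec hP1 n N (le_max_right m n)
      (fun w => (prodA a₁ n w) ^ 2)
    calc B = ∑ z : Fin (n + 1) → Fin K, pathP P μvec n z * (prodA a₁ n z) ^ 2 := by
          rw [hB, ← this]
      _ ≤ lam ^ n := secondMoment P μvec a₁ hP0 hμ0 hμ1 hlam0 hub n
  have hfinal : Real.sqrt A * Real.sqrt B ≤ lam ^ (((m : ℝ) + (n : ℝ)) / 2) := by
    have h1 : Real.sqrt A * Real.sqrt B ≤ Real.sqrt (lam ^ m) * Real.sqrt (lam ^ n) :=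
      mul_le_mul (Real.sqrt_le_sqrt hAm) (Real.sqrt_le_sqrt hBn)
        (Real.sqrt_nonneg B) (Real.sqrt_nonneg _)
    have h2 : Real.sqrt (lam ^ m) * Real.sqrt (lam ^ n)
        = lam ^ (((m : ℝ) + (n : ℝ)) / 2) := by
      rw [← Real.sqrt_mul (pow_nonneg hlam0 m), ← pow_add]
      rw [Real.sqrt_eq_rpow, ← Real.rpow_natCast lam (m + n),
        ← Real.rpow_mul hlam0]
      congr 1
      push_cast
      ring
    linarith
  rw [hint]
  exact le_trans hSle hfinal
end
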